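/- arXiv:2508.17743 — 2 statements merged into one kernel-verified Lean document; each statement's English description precedes it below -/
import Mathlib

section
/- Let G be a simple graph on a finite vertex type and let v be a vertex of G. Then the permanental polynomial of the Laplacian matrix satisfies ψ(L(G)) = (x − d(v))·ψ(L_v(G)) + Σ_{u ∈ N(v)} ψ(L_{uv}(G)) + 2·Σ_{C ∈ 𝔠_G(v)} ψ(L_{V(C)}(G)). -/
open Polynomial Matrix

attribute [local instance] Classical.propDecidable

noncomputable section

/-- The permanent of a square matrix: `per M = ∑_{σ} ∏_i M i (σ i)`. -/
def Matrix.per {n R : Type*} [Fintype n] [DecidableEq n] [CommRing R]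
    (M : Matrix n n R) : R :=
  ∑ σ : Equiv.Perm n, ∏ i, M i (σ i)

/-- The characteristic polynomial `φ(M) = det (x·I - M)`. -/
def phi {n R : Type*} [Fintype n] [DecidableEq n] [CommRing R]
    (M : Matrix n n (Polynomial R)) : Polynomial R :=
  ((Polynomial.X : Polynomial R) • (1 : Matrix n n (Polynomial R)) - M).det

/-- The permanental polynomial `ψ(M) = per (x·I - M)`. -/
def psi {n R : Type*} [Fintype n] [DecidableEq n] [CommRing R]
    (M : Matrix n n (Polynomial R)) : Polynomial R :=
  ((Polynomial.X : Polynomial R) • (1 : Matrix n n (Polynomial R)) - M).per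

variable {V : Type*}

/-- The principal submatrix of `M` obtained by deleting the rows and columns indexed by `S`. -/
def delSub {R : Type*} (M : Matrix V V R) (S : Set V) :
    Matrix {w : V // w ∉ S} {w : V // w ∉ S} R :=
  M.submatrix Subtype.val Subtype.val

/-- `C` is a cycle of `G`: a subgraph of `G` that is connected, has nonempty vertex set,
and in which every vertex of `C` has degree exactly `2` in `C`. -/
def IsCycleSub (G : SimpleGraph V) (C : G.Subgraph) : Prop :=
  C.Connected ∧ C.verts.Nonempty ∧ ∀ w ∈ C.verts, (C.neighborSet w).ncard = 2

variable [Fintype V] [DecidableEq V]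

/-- The degree diagonal matrix `D(G)` of a graph. -/
def degMat (R : Type*) [CommRing R] (G : SimpleGraph V) [DecidableRel G.Adj] :
    Matrix V V R :=
  Matrix.diagonal fun w => (G.degree w : R)

/-- The Laplacian matrix `L(G) = D(G) - A(G)`. -/
def lapMat (R : Type*) [CommRing R] (G : SimpleGraph V) [DecidableRel G.Adj] :
    Matrix V V R :=
  degMat R G - G.adjMatrix R

theorem Equiv.Perm.apply_inv_self {α : Type*} (f : Equiv.Perm α) (x : α) : f (f⁻¹ x) = x :=
  f.apply_symm_apply x

theorem Equiv.Perm.inv_apply_self {α : Type*} (f : Equiv.Perm α) (x : α) : f⁻¹ (f x) = x :=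
  f.symm_apply_apply x

namespace LPR
open Equiv Finset

variable (G : SimpleGraph V) [DecidableRel G.Adj]

/-- entries of xI - L -/
def EM : Matrix V V (Polynomial ℤ) :=
  (Polynomial.X : Polynomial ℤ) • (1 : Matrix V V (Polynomial ℤ)) - lapMat (Polynomial ℤ) G

lemma EM_diag (w : V) : EM G w w = Polynomial.X - (G.degree w : Polynomial ℤ) := by
  simp [EM, lapMat, degMat, Matrix.sub_apply, Matrix.smul_apply, Matrix.one_apply,
    Matrix.diagonal_apply, SimpleGraph.adjMatrix_apply]

lemma EM_ne {w u : V} (h : w ≠ u) : EM G w u = if G.Adj w u then 1 else 0 := by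
  simp [EM, lapMat, degMat, Matrix.sub_apply, Matrix.smul_apply, Matrix.one_apply,
    Matrix.diagonal_apply, SimpleGraph.adjMatrix_apply, h]

lemma psi_eq_sum : psi (lapMat (Polynomial ℤ) G) = ∑ σ : Equiv.Perm V, ∏ w, EM G w (σ w) := rfl

lemma psi_delSub (S : Set V) {F : Fintype {w : V // w ∉ S}} {D : DecidableEq {w : V // w ∉ S}} :
    @psi _ _ F D _ (delSub (lapMat (Polynomial ℤ) G) S)
      = ∑ τ : Equiv.Perm {w : V // w ∉ S}, ∏ a, EM G a.1 (τ a).1 := by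
  unfold psi Matrix.per
  refine Finset.sum_congr rfl fun τ _ => Finset.prod_congr rfl fun a _ => ?_
  by_cases h : a = τ a
  · rw [← h]
    simp [delSub, EM, Matrix.sub_apply, Matrix.smul_apply, Matrix.one_apply]
  · have h2 : a.1 ≠ (τ a).1 := fun hh => h (Subtype.ext hh)
    simp [delSub, EM, Matrix.sub_apply, Matrix.smul_apply, Matrix.one_apply, h, h2]

lemma psi_delSub_congr (M : Matrix V V (Polynomial ℤ)) {S T : Set V}
    {F1 : Fintype {w : V // w ∉ S}} {D1 : DecidableEq {w : V // w ∉ S}}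
    {F2 : Fintype {w : V // w ∉ T}} {D2 : DecidableEq {w : V // w ∉ T}}
    (h : S = T) :
    @psi _ _ F1 D1 _ (delSub M S) = @psi _ _ F2 D2 _ (delSub M T) := by
  subst h
  cases Subsingleton.elim F1 F2
  cases Subsingleton.elim D1 D2
  rfl

/-- predicate for the "cycle at v" components -/
def KP (v : V) (c : Equiv.Perm V) : Prop := c = 1 ∨ (c.IsCycle ∧ v ∈ c.support)

/-- vertex set of the cycle together with v -/
def Fs (v : V) (c : Equiv.Perm V) : Finset V := insert v c.support

lemma cycleOf_KP (v : V) (σ : Equiv.Perm V) : KP v (σ.cycleOf v) := by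
  by_cases h : σ v = v
  · exact Or.inl ((Equiv.Perm.cycleOf_eq_one_iff σ).2 h)
  · exact Or.inr ⟨Equiv.Perm.isCycle_cycleOf σ h,
      Equiv.Perm.mem_support_cycleOf_iff.2 ⟨Equiv.Perm.SameCycle.refl _ _,
        Equiv.Perm.mem_support.2 h⟩⟩

lemma mem_Fs_cycleOf {v w : V} (σ : Equiv.Perm V) :
    w ∈ Fs v (σ.cycleOf v) ↔ (w = v ∨ (σ.SameCycle v w ∧ σ v ≠ v)) := by
  rw [Fs, Finset.mem_insert, Equiv.Perm.mem_support_cycleOf_iff, Equiv.Perm.mem_support]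

lemma Fs_invariant {v : V} (σ : Equiv.Perm V) :
    ∀ w, w ∉ (↑(Fs v (σ.cycleOf v)) : Set V) ↔ σ w ∉ (↑(Fs v (σ.cycleOf v)) : Set V) := by
  intro w
  have hmem : ∀ u, (u ∈ (↑(Fs v (σ.cycleOf v)) : Set V)) ↔
      (u = v ∨ (σ.SameCycle v u ∧ σ v ≠ v)) := fun u => mem_Fs_cycleOf σ
  rw [not_iff_not.symm] at *
  simp only [not_not]
  rw [hmem w, hmem (σ w)]
  by_cases hv : σ v = v
  · simp only [hv, ne_eq, not_true_eq_false, and_false, or_false]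
    exact ⟨fun h => h ▸ hv, fun h => σ.injective (h.trans hv.symm)⟩
  · simp only [hv, ne_eq, not_false_eq_true, and_true]
    have h1 : σ.SameCycle v (σ w) ↔ σ.SameCycle v w := Equiv.Perm.sameCycle_apply_right
    constructor
    · rintro (rfl | h)
      · exact Or.inr (h1.2 (Equiv.Perm.SameCycle.refl _ _))
      · exact Or.inr (h1.2 h)
    · rintro (h | h)
      · exact Or.inr (Equiv.Perm.SameCycle.symm (⟨1, by simpa using h⟩ : σ.SameCycle w v))
      · exact Or.inr (h1.1 h)

lemma supp_subset_Fs (v : V) (c : Equiv.Perm V) : c.support ⊆ Fs v c :=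
  fun _ h => Finset.mem_insert_of_mem h

lemma sameCycle_of_mem_Fs {v w : V} {σ : Equiv.Perm V} (h : w ∈ Fs v (σ.cycleOf v)) :
    σ.SameCycle v w := by
  rcases (mem_Fs_cycleOf σ).1 h with rfl | h
  · exact Equiv.Perm.SameCycle.refl _ _
  · exact h.1

/-- the permutation on the complement induced by σ -/
def toFiber (v : V) (c : Equiv.Perm V) (σ : Equiv.Perm V) (hσ : σ.cycleOf v = c) :
    Equiv.Perm {w : V // w ∉ (↑(Fs v c) : Set V)} :=
  σ.subtypePerm (hσ ▸ fun w => (Fs_invariant σ w).symm)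

lemma decompC (v : V) (σ : Equiv.Perm V) (c : Equiv.Perm V) (hσ : σ.cycleOf v = c) :
    c * Equiv.Perm.ofSubtype (toFiber v c σ hσ) = σ := by
  subst hσ
  ext w
  simp only [Equiv.Perm.mul_apply]
  by_cases hw : w ∈ (↑(Fs v (σ.cycleOf v)) : Set V)
  · rw [Equiv.Perm.ofSubtype_apply_of_not_mem _ (by simpa using hw)]
    exact (sameCycle_of_mem_Fs (by simpa using hw)).cycleOf_apply
  · have key : Equiv.Perm.ofSubtype (toFiber v (σ.cycleOf v) σ rfl) w = σ w :=
      Equiv.Perm.ofSubtype_apply_of_mem (toFiber v (σ.cycleOf v) σ rfl) hw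
    rw [key]
    have h2 : σ w ∉ (↑(Fs v (σ.cycleOf v)) : Set V) := (Fs_invariant σ w).1 hw
    have h3 : σ w ∉ (σ.cycleOf v).support :=
      fun hh => h2 (by simpa using supp_subset_Fs v _ hh)
    exact Equiv.Perm.notMem_support.mp h3

lemma decompD (v : V) (c : Equiv.Perm V) (hc : KP v c)
    (τ : Equiv.Perm {w : V // w ∉ (↑(Fs v c) : Set V)}) :
    (c * Equiv.Perm.ofSubtype τ).cycleOf v = c := by
  have hv : v ∈ Fs v c := Finset.mem_insert_self v _
  have hρv : Equiv.Perm.ofSubtype τ v = v :=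
    Equiv.Perm.ofSubtype_apply_of_not_mem _ (by simpa using hv)
  have hdisj : c.Disjoint (Equiv.Perm.ofSubtype τ) := by
    intro x
    by_cases hx : x ∈ (↑(Fs v c) : Set V)
    · exact Or.inr (Equiv.Perm.ofSubtype_apply_of_not_mem _ (by simpa using hx))
    · exact Or.inl (Equiv.Perm.notMem_support.mp
        (fun hh => hx (by simpa using supp_subset_Fs v c hh)))
  rw [Equiv.Perm.cycleOf_mul_of_apply_right_eq_self hdisj.commute v hρv]
  rcases hc with rfl | ⟨hcyc, hv2⟩
  · exact (Equiv.Perm.cycleOf_eq_one_iff 1).2 rfl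
  · exact hcyc.cycleOf_eq (Equiv.Perm.mem_support.1 hv2)

lemma decompE (v : V) (c : Equiv.Perm V) (hc : KP v c)
    (τ : Equiv.Perm {w : V // w ∉ (↑(Fs v c) : Set V)}) :
    toFiber v c (c * Equiv.Perm.ofSubtype τ) (decompD v c hc τ) = τ := by
  ext a
  have h1 : Equiv.Perm.ofSubtype τ a.1 = (τ a).1 :=
    Equiv.Perm.ofSubtype_apply_of_mem τ a.2
  have h2 : (τ a).1 ∉ c.support :=
    fun hh => (τ a).2 (by simpa using supp_subset_Fs v c hh)
  show (c * Equiv.Perm.ofSubtype τ) a.1 = (τ a).1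
  rw [Equiv.Perm.mul_apply, h1]
  exact Equiv.Perm.notMem_support.mp h2

lemma decompF (G : SimpleGraph V) [DecidableRel G.Adj] (v : V) (c : Equiv.Perm V)
    (σ : Equiv.Perm V) (hσ : σ.cycleOf v = c) :
    ∏ w, EM G w (σ w)
      = (∏ w ∈ Fs v c, EM G w (c w))
        * ∏ a : {w : V // w ∉ (↑(Fs v c) : Set V)}, EM G a.1 ((toFiber v c σ hσ a) : V) := by
  subst hσ
  rw [← Finset.prod_mul_prod_compl (Fs v (σ.cycleOf v))]
  congr 1
  · refine Finset.prod_congr rfl fun w hw => ?_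
    rw [(sameCycle_of_mem_Fs hw).cycleOf_apply]
  · have h2 : ∏ w ∈ (Fs v (σ.cycleOf v))ᶜ, EM G w (σ w)
        = ∏ a : {w : V // w ∉ (↑(Fs v (σ.cycleOf v)) : Set V)}, EM G a.1 (σ a.1) :=
      Finset.prod_subtype _ (by simp) _
    exact h2.trans rfl


lemma fiber_sum (v : V) (c : Equiv.Perm V) (hc : KP v c) :
    ∑ σ ∈ Finset.univ.filter (fun σ : Equiv.Perm V => σ.cycleOf v = c), ∏ w, EM G w (σ w)
      = (∏ w ∈ Fs v c, EM G w (c w)) * psi (delSub (lapMat (Polynomial ℤ) G) ↑(Fs v c)) := by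
  rw [psi_delSub, Finset.mul_sum]
  refine Finset.sum_bij' (i := fun σ hσ => toFiber v c σ (by simpa using hσ))
    (j := fun τ _ => c * Equiv.Perm.ofSubtype τ)
    (fun σ hσ => Finset.mem_univ _) (fun τ _ => by simpa using decompD v c hc τ)
    (fun σ hσ => decompC v σ c (by simpa using hσ)) (fun τ _ => decompE v c hc τ)
    (fun σ hσ => decompF G v c σ (by simpa using hσ))

lemma step1 (v : V) :
    psi (lapMat (Polynomial ℤ) G)
      = ∑ c ∈ Finset.univ.filter (KP v),
          (∏ w ∈ Fs v c, EM G w (c w)) * psi (delSub (lapMat (Polynomial ℤ) G) ↑(Fs v c)) := by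
  rw [psi_eq_sum]
  rw [← Finset.sum_fiberwise_of_maps_to (g := fun σ : Equiv.Perm V => σ.cycleOf v)
    (fun σ _ => Finset.mem_filter.2 ⟨Finset.mem_univ _, cycleOf_KP v σ⟩)
    (fun σ => ∏ w, EM G w (σ w))]
  exact Finset.sum_congr rfl fun c hc => fiber_sum G v c (Finset.mem_filter.1 hc).2


def K2 (v : V) : Finset (Equiv.Perm V) :=
  Finset.univ.filter fun c => c.IsCycle ∧ v ∈ c.support ∧ c.support.card = 2

def K3 (v : V) : Finset (Equiv.Perm V) :=
  Finset.univ.filter fun c => c.IsCycle ∧ v ∈ c.support ∧ 3 ≤ c.support.card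

def K3g (v : V) : Finset (Equiv.Perm V) :=
  (K3 v).filter fun c => ∀ w ∈ c.support, G.Adj w (c w)

lemma filterKP (v : V) : Finset.univ.filter (KP v) = insert 1 (K2 v ∪ K3 v) := by
  ext c
  simp only [Finset.mem_filter, Finset.mem_univ, true_and, Finset.mem_insert,
    Finset.mem_union, KP, K2, K3]
  constructor
  · rintro (rfl | ⟨hc, hv⟩)
    · exact Or.inl rfl
    · right
      have h2 := hc.two_le_card_support
      rcases Nat.lt_or_ge c.support.card 3 with h | h
      · exact Or.inl ⟨hc, hv, by omega⟩
      · exact Or.inr ⟨hc, hv, h⟩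
  · rintro (rfl | ⟨hc, hv, _⟩ | ⟨hc, hv, _⟩)
    exacts [Or.inl rfl, Or.inr ⟨hc, hv⟩, Or.inr ⟨hc, hv⟩]

lemma one_not_mem_K23 (v : V) : (1 : Equiv.Perm V) ∉ K2 v ∪ K3 v := by
  intro h
  rcases Finset.mem_union.1 h with h | h
  · exact ((Finset.mem_filter.1 h).2.1).ne_one rfl
  · exact ((Finset.mem_filter.1 h).2.1).ne_one rfl

lemma K2_K3_disj (v : V) : Disjoint (K2 v) (K3 v) := by
  rw [Finset.disjoint_left]
  intro c h2 h3
  have a1 := (Finset.mem_filter.1 h2).2.2.2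
  have a2 := (Finset.mem_filter.1 h3).2.2.2
  omega

lemma term1 (v : V) :
    (∏ w ∈ Fs v (1 : Equiv.Perm V), EM G w ((1 : Equiv.Perm V) w))
        * psi (delSub (lapMat (Polynomial ℤ) G) ↑(Fs v (1 : Equiv.Perm V)))
      = (Polynomial.X - (G.degree v : Polynomial ℤ))
        * psi (delSub (lapMat (Polynomial ℤ) G) {v}) := by
  have hFs : Fs v (1 : Equiv.Perm V) = {v} := by
    rw [Fs, Equiv.Perm.support_one]; rfl
  rw [hFs]
  congr 1
  · rw [Finset.prod_singleton, Equiv.Perm.one_apply, EM_diag]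
  · exact psi_delSub_congr _ (by simp)

lemma Fs_swap {v u : V} (hu : u ≠ v) : Fs v (Equiv.swap v u) = {v, u} := by
  rw [Fs, Equiv.Perm.support_swap (Ne.symm hu)]
  exact Finset.insert_idem v {u}

lemma g_swap (v u : V) (hu : u ≠ v) :
    ∏ w ∈ Fs v (Equiv.swap v u), EM G w (Equiv.swap v u w)
      = if G.Adj v u then 1 else 0 := by
  rw [Fs_swap hu, Finset.prod_pair (Ne.symm hu), Equiv.swap_apply_left, Equiv.swap_apply_right,
    EM_ne G (Ne.symm hu), EM_ne G hu]
  by_cases h : G.Adj v u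
  · simp [h, h.symm]
  · simp [h]

lemma K2_elem {v : V} {c : Equiv.Perm V} (hc : c ∈ K2 v) :
    c v ≠ v ∧ c = Equiv.swap v (c v) := by
  obtain ⟨-, hcyc, hv, hcard⟩ := Finset.mem_filter.1 hc
  obtain ⟨x, y, hxy, rfl⟩ := Equiv.Perm.card_support_eq_two.1 hcard
  rw [Equiv.Perm.support_swap hxy, Finset.mem_insert, Finset.mem_singleton] at hv
  rcases hv with rfl | rfl
  · rw [Equiv.swap_apply_left]
    exact ⟨Ne.symm hxy, rfl⟩
  · rw [Equiv.swap_apply_right]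
    exact ⟨hxy, Equiv.swap_comm x v⟩

lemma swap_mem_K2 {v u : V} (hu : u ≠ v) : Equiv.swap v u ∈ K2 v := by
  refine Finset.mem_filter.2 ⟨Finset.mem_univ _, Equiv.Perm.isCycle_swap (Ne.symm hu), ?_, ?_⟩
  · rw [Equiv.Perm.support_swap (Ne.symm hu)]
    exact Finset.mem_insert_self _ _
  · rw [Equiv.Perm.support_swap (Ne.symm hu)]
    exact Finset.card_pair (Ne.symm hu)

lemma term2 (v : V) :
    ∑ c ∈ K2 v, (∏ w ∈ Fs v c, EM G w (c w)) * psi (delSub (lapMat (Polynomial ℤ) G) ↑(Fs v c))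
      = ∑ u ∈ G.neighborFinset v, psi (delSub (lapMat (Polynomial ℤ) G) {u, v}) := by
  have h1 : ∑ c ∈ K2 v, (∏ w ∈ Fs v c, EM G w (c w))
        * psi (delSub (lapMat (Polynomial ℤ) G) ↑(Fs v c))
      = ∑ u ∈ Finset.univ.filter (· ≠ v),
          (if G.Adj v u then 1 else 0) * psi (delSub (lapMat (Polynomial ℤ) G) {u, v}) := by
    refine Finset.sum_nbij' (i := fun c => c v) (j := fun u => Equiv.swap v u)
      (fun c hc => Finset.mem_filter.2 ⟨Finset.mem_univ _, (K2_elem hc).1⟩)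
      (fun u hu => swap_mem_K2 (Finset.mem_filter.1 hu).2)
      (fun c hc => ((K2_elem hc).2).symm)
      (fun u hu => Equiv.swap_apply_left v u)
      (fun c hc => ?_)
    obtain ⟨hne, hswap⟩ := K2_elem hc
    have key : (∏ w ∈ Fs v (Equiv.swap v (c v)), EM G w (Equiv.swap v (c v) w))
          * psi (delSub (lapMat (Polynomial ℤ) G) ↑(Fs v (Equiv.swap v (c v))))
        = (if G.Adj v (c v) then 1 else 0)
          * psi (delSub (lapMat (Polynomial ℤ) G) {c v, v}) := by
      congr 1
      · exact g_swap G v (c v) hne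
      · refine psi_delSub_congr _ ?_
        rw [Fs_swap hne]
        ext w
        simp only [Finset.coe_insert, Finset.coe_singleton, Set.mem_insert_iff,
          Set.mem_singleton_iff]
        tauto
    rw [← key, ← hswap]
  rw [h1]
  simp only [ite_mul, one_mul, zero_mul]
  rw [← Finset.sum_filter]
  refine Finset.sum_congr ?_ fun u _ => rfl
  ext u
  rw [Finset.mem_filter, Finset.mem_filter, SimpleGraph.mem_neighborFinset]
  constructor
  · rintro ⟨-, hadj⟩
    exact hadj
  · intro hadj
    exact ⟨⟨Finset.mem_univ _, hadj.ne'⟩, hadj⟩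

lemma term3 (v : V) :
    ∑ c ∈ K3 v, (∏ w ∈ Fs v c, EM G w (c w)) * psi (delSub (lapMat (Polynomial ℤ) G) ↑(Fs v c))
      = ∑ c ∈ K3g G v, psi (delSub (lapMat (Polynomial ℤ) G) ↑c.support) := by
  rw [K3g, Finset.sum_filter]
  refine Finset.sum_congr rfl fun c hc => ?_
  obtain ⟨-, hcyc, hv, hcard⟩ := Finset.mem_filter.1 hc
  have hFs : Fs v c = c.support := Finset.insert_eq_self.2 hv
  rw [hFs]
  by_cases hall : ∀ w ∈ c.support, G.Adj w (c w)
  · rw [if_pos hall]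
    have hone : ∏ w ∈ c.support, EM G w (c w) = 1 := by
      refine Finset.prod_eq_one fun w hw => ?_
      rw [EM_ne G (Ne.symm (Equiv.Perm.mem_support.1 hw)), if_pos (hall w hw)]
    rw [hone, one_mul]
  · rw [if_neg hall]
    push_neg at hall
    obtain ⟨w, hw, hnadj⟩ := hall
    have hzero : ∏ w ∈ c.support, EM G w (c w) = 0 :=
      Finset.prod_eq_zero hw
        (by rw [EM_ne G (Ne.symm (Equiv.Perm.mem_support.1 hw)), if_neg hnadj])
    rw [hzero, zero_mul]

lemma step2 (v : V) :
    psi (lapMat (Polynomial ℤ) G)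
      = (Polynomial.X - (G.degree v : Polynomial ℤ))
          * psi (delSub (lapMat (Polynomial ℤ) G) {v})
        + ∑ u ∈ G.neighborFinset v, psi (delSub (lapMat (Polynomial ℤ) G) {u, v})
        + ∑ c ∈ K3g G v, psi (delSub (lapMat (Polynomial ℤ) G) ↑c.support) := by
  rw [step1 G v, filterKP, Finset.sum_insert (one_not_mem_K23 v),
    Finset.sum_union (K2_K3_disj v), term1, term2, term3]
  ring


/-- the cycle subgraph induced by a good cyclic permutation -/
def Cyc (c : Equiv.Perm V) : G.Subgraph where
  verts := ↑c.support
  Adj w u := G.Adj w u ∧ ((w ∈ c.support ∧ u = c w) ∨ (u ∈ c.support ∧ w = c u))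
  adj_sub h := h.1
  edge_vert {w u} h := by
    rcases h.2 with ⟨hw, _⟩ | ⟨hu, hcu⟩
    · exact hw
    · exact Finset.mem_coe.2 (hcu ▸ Equiv.Perm.apply_mem_support.2 hu)
  symm := ⟨fun w u h => ⟨h.1.symm, h.2.symm⟩⟩

lemma K3g_spec {v : V} {c : Equiv.Perm V} (hc : c ∈ K3g G v) :
    c.IsCycle ∧ v ∈ c.support ∧ 3 ≤ c.support.card ∧ ∀ w ∈ c.support, G.Adj w (c w) := by
  obtain ⟨h1, h2⟩ := Finset.mem_filter.1 hc
  obtain ⟨-, h3, h4, h5⟩ := Finset.mem_filter.1 h1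
  exact ⟨h3, h4, h5, h2⟩

lemma no_two_cycle {c : Equiv.Perm V} (hcyc : c.IsCycle) (hcard : 3 ≤ c.support.card)
    {w : V} (hw : w ∈ c.support) : c (c w) ≠ w := by
  intro h
  have h2 : c ^ 2 = 1 :=
    (hcyc.pow_eq_one_iff' (x := w) (Equiv.Perm.mem_support.1 hw)).2
      (by simpa [sq, Equiv.Perm.mul_apply] using h)
  have h3 := Nat.le_of_dvd (by norm_num) (orderOf_dvd_of_pow_eq_one h2)
  have h4 : orderOf c = c.support.card := hcyc.orderOf
  omega

lemma good_inv_mem {c : Equiv.Perm V} {w : V} (hw : w ∈ c.support) : c⁻¹ w ∈ c.support := by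
  rw [← Equiv.Perm.support_inv]
  exact Equiv.Perm.apply_mem_support.2 (by rwa [Equiv.Perm.support_inv])

lemma good_inv_adj {v : V} {c : Equiv.Perm V} (hc : c ∈ K3g G v) {w : V}
    (hw : w ∈ c.support) : G.Adj w (c⁻¹ w) := by
  obtain ⟨-, -, -, hgood⟩ := K3g_spec G hc
  have h1 := hgood (c⁻¹ w) (good_inv_mem hw)
  rw [Equiv.Perm.apply_inv_self] at h1
  exact h1.symm

lemma cw_ne_cinvw {c : Equiv.Perm V} (hcyc : c.IsCycle) (hcard : 3 ≤ c.support.card)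
    {w : V} (hw : w ∈ c.support) : c w ≠ c⁻¹ w := by
  intro h
  exact no_two_cycle hcyc hcard hw (by rw [h, Equiv.Perm.apply_inv_self])

lemma cyc_nbhd {v : V} {c : Equiv.Perm V} (hc : c ∈ K3g G v) {w : V} (hw : w ∈ c.support) :
    (Cyc G c).neighborSet w = {c w, c⁻¹ w} := by
  obtain ⟨hcyc, hv, hcard, hgood⟩ := K3g_spec G hc
  ext u
  simp only [SimpleGraph.Subgraph.mem_neighborSet, Set.mem_insert_iff, Set.mem_singleton_iff]
  constructor
  · rintro ⟨hadj, ⟨hws, rfl⟩ | ⟨hus, hcu⟩⟩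
    · exact Or.inl rfl
    · exact Or.inr (by rw [hcu, Equiv.Perm.inv_apply_self])
  · rintro (rfl | rfl)
    · exact ⟨hgood w hw, Or.inl ⟨hw, rfl⟩⟩
    · exact ⟨good_inv_adj G hc hw, Or.inr ⟨good_inv_mem hw, (Equiv.Perm.apply_inv_self c w).symm⟩⟩

lemma cyc_nbhd_ncard {v : V} {c : Equiv.Perm V} (hc : c ∈ K3g G v) {w : V}
    (hw : w ∈ c.support) : ((Cyc G c).neighborSet w).ncard = 2 := by
  obtain ⟨hcyc, hv, hcard, hgood⟩ := K3g_spec G hc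
  rw [cyc_nbhd G hc hw]
  exact Set.ncard_pair (cw_ne_cinvw hcyc hcard hw)

lemma cyc_reach {v : V} {c : Equiv.Perm V} (hc : c ∈ K3g G v) (k : ℕ) :
    (Cyc G c).coe.Reachable
      ⟨v, Finset.mem_coe.2 (K3g_spec G hc).2.1⟩
      ⟨(c ^ k) v, Finset.mem_coe.2
        (Equiv.Perm.pow_apply_mem_support.2 (K3g_spec G hc).2.1)⟩ := by
  obtain ⟨hcyc, hv, hcard, hgood⟩ := K3g_spec G hc
  induction k with
  | zero =>
    simp only [pow_zero, Equiv.Perm.one_apply]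
    exact SimpleGraph.Reachable.refl _
  | succ k ih =>
    refine ih.trans (SimpleGraph.Adj.reachable ?_)
    have hmem : (c ^ k) v ∈ c.support := Equiv.Perm.pow_apply_mem_support.2 hv
    have hadj2 : (Cyc G c).Adj ((c ^ k) v) ((c ^ (k + 1)) v) := by
      have hpow : (c ^ (k + 1)) v = c ((c ^ k) v) := by
        rw [pow_succ', Equiv.Perm.mul_apply]
      rw [hpow]
      exact ⟨hgood _ hmem, Or.inl ⟨hmem, rfl⟩⟩
    exact hadj2.coe

lemma cyc_connected {v : V} {c : Equiv.Perm V} (hc : c ∈ K3g G v) : (Cyc G c).Connected := by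
  obtain ⟨hcyc, hv, hcard, hgood⟩ := K3g_spec G hc
  rw [SimpleGraph.Subgraph.connected_iff]
  constructor
  · rw [SimpleGraph.Subgraph.preconnected_iff]
    intro a b
    have key : ∀ x : (Cyc G c).verts,
        (Cyc G c).coe.Reachable ⟨v, Finset.mem_coe.2 hv⟩ x := by
      rintro ⟨x, hx⟩
      have hxs : x ∈ c.support := Finset.mem_coe.1 hx
      obtain ⟨i, -, hix⟩ :=
        (hcyc.sameCycle (Equiv.Perm.mem_support.1 hv)
          (Equiv.Perm.mem_support.1 hxs)).exists_pow_eq'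
      have h2 := cyc_reach G hc i
      have h3 : (⟨(c ^ i) v, Finset.mem_coe.2
          (Equiv.Perm.pow_apply_mem_support.2 (K3g_spec G hc).2.1)⟩ : (Cyc G c).verts)
          = ⟨x, hx⟩ := Subtype.ext hix
      rw [h3] at h2
      exact h2
    exact (key a).symm.trans (key b)
  · exact ⟨v, Finset.mem_coe.2 hv⟩

lemma cyc_isCycleSub {v : V} {c : Equiv.Perm V} (hc : c ∈ K3g G v) :
    IsCycleSub G (Cyc G c) ∧ v ∈ (Cyc G c).verts := by
  obtain ⟨hcyc, hv, hcard, hgood⟩ := K3g_spec G hc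
  exact ⟨⟨cyc_connected G hc, ⟨v, Finset.mem_coe.2 hv⟩,
    fun w hw => cyc_nbhd_ncard G hc (Finset.mem_coe.1 hw)⟩, Finset.mem_coe.2 hv⟩

lemma Cyc_inv (c : Equiv.Perm V) : Cyc G c⁻¹ = Cyc G c := by
  refine SimpleGraph.Subgraph.ext ?_ ?_
  · show (↑(c⁻¹).support : Set V) = ↑c.support
    rw [Equiv.Perm.support_inv]
  · ext w u
    show G.Adj w u ∧ _ ↔ G.Adj w u ∧ _
    refine and_congr_right fun _ => ?_
    rw [Equiv.Perm.support_inv]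
    constructor
    · rintro (⟨hws, rfl⟩ | ⟨hus, hcu⟩)
      · exact Or.inr ⟨good_inv_mem hws, (Equiv.Perm.apply_inv_self c w).symm⟩
      · exact Or.inl ⟨by rw [hcu]; exact good_inv_mem hus, by rw [hcu, Equiv.Perm.apply_inv_self]⟩
    · rintro (⟨hws, rfl⟩ | ⟨hus, hcu⟩)
      · exact Or.inr ⟨Equiv.Perm.apply_mem_support.2 hws, (Equiv.Perm.inv_apply_self c w).symm⟩
      · exact Or.inl ⟨by rw [hcu]; exact Equiv.Perm.apply_mem_support.2 hus,
          by rw [hcu, Equiv.Perm.inv_apply_self]⟩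

lemma K3g_inv {v : V} {c : Equiv.Perm V} (hc : c ∈ K3g G v) : c⁻¹ ∈ K3g G v := by
  obtain ⟨hcyc, hv, hcard, hgood⟩ := K3g_spec G hc
  refine Finset.mem_filter.2 ⟨Finset.mem_filter.2 ⟨Finset.mem_univ _, hcyc.inv, ?_, ?_⟩, ?_⟩
  · rwa [Equiv.Perm.support_inv]
  · rwa [Equiv.Perm.support_inv]
  · intro w hw
    rw [Equiv.Perm.support_inv] at hw
    exact good_inv_adj G hc hw

lemma K3g_ne_inv {v : V} {c : Equiv.Perm V} (hc : c ∈ K3g G v) : c ≠ c⁻¹ := by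
  obtain ⟨hcyc, hv, hcard, hgood⟩ := K3g_spec G hc
  intro h
  have h2 : c ^ 2 = 1 := by
    rw [sq]
    nth_rewrite 2 [h]
    simp
  have h3 := Nat.le_of_dvd (by norm_num) (orderOf_dvd_of_pow_eq_one h2)
  have h4 : orderOf c = c.support.card := hcyc.orderOf
  omega


lemma Cyc_verts (c : Equiv.Perm V) : (Cyc G c).verts = ↑c.support := rfl

lemma unique_eq {v : V} {c c' : Equiv.Perm V} (hc : c ∈ K3g G v) (hc' : c' ∈ K3g G v)
    (hCyc : Cyc G c' = Cyc G c) (hvv : c' v = c v) : c' = c := by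
  obtain ⟨hcyc, hv, hcard, hgood⟩ := K3g_spec G hc
  obtain ⟨hcyc', hv', hcard', hgood'⟩ := K3g_spec G hc'
  have hsupp : c'.support = c.support := by
    have := congrArg SimpleGraph.Subgraph.verts hCyc
    rw [Cyc_verts, Cyc_verts] at this
    exact Finset.coe_injective this
  have hstep : ∀ w ∈ c.support, c' w = c w ∨ c' w = c⁻¹ w := by
    intro w hw
    have hadj : (Cyc G c').Adj w (c' w) :=
      ⟨hgood' w (hsupp ▸ hw), Or.inl ⟨hsupp ▸ hw, rfl⟩⟩
    rw [hCyc] at hadj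
    have : c' w ∈ (Cyc G c).neighborSet w := hadj
    rw [cyc_nbhd G hc hw] at this
    exact this
  have hkey : ∀ k : ℕ, c' ((c ^ k) v) = (c ^ (k + 1)) v := by
    intro k
    induction k with
    | zero => simpa using hvv
    | succ k ih =>
      have hpow : ∀ m : ℕ, (c ^ (m + 1)) v = c ((c ^ m) v) := fun m => by
        rw [pow_succ', Equiv.Perm.mul_apply]
      have hwmem : (c ^ (k + 1)) v ∈ c.support := Equiv.Perm.pow_apply_mem_support.2 hv
      rcases hstep _ hwmem with h | h
      · rw [h, hpow (k + 1)]
      · exfalso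
        have h1 : c⁻¹ ((c ^ (k + 1)) v) = (c ^ k) v := by
          rw [hpow k, Equiv.Perm.inv_apply_self]
        rw [h1] at h
        have h2 : c' (c' ((c ^ k) v)) = (c ^ k) v := by rw [ih, h]
        have hmem' : (c ^ k) v ∈ c'.support := by
          rw [hsupp]; exact Equiv.Perm.pow_apply_mem_support.2 hv
        exact no_two_cycle hcyc' hcard' hmem' h2
  ext w
  by_cases hw : w ∈ c.support
  · obtain ⟨i, -, hi⟩ :=
      (hcyc.sameCycle (Equiv.Perm.mem_support.1 hv) (Equiv.Perm.mem_support.1 hw)).exists_pow_eq'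
    rw [← hi, hkey i, pow_succ', Equiv.Perm.mul_apply]
  · have h1 : c' w = w := Equiv.Perm.notMem_support.1 (by rwa [hsupp])
    have h2 : c w = w := Equiv.Perm.notMem_support.1 hw
    rw [h1, h2]


/-- edges of C incident to x -/
def inc (C : G.Subgraph) (x : V) : Finset (Sym2 V) :=
  Finset.univ.filter (fun e => e ∈ C.edgeSet ∧ x ∈ e)

lemma mem_inc {C : G.Subgraph} {x : V} {e : Sym2 V} :
    e ∈ inc G C x ↔ e ∈ C.edgeSet ∧ x ∈ e := by simp [inc]

lemma exists_other {C : G.Subgraph} {x : V} {e : Sym2 V} (he : e ∈ C.edgeSet) (hx : x ∈ e) :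
    ∃ b, C.Adj x b ∧ e = s(x, b) := by
  induction e with
  | _ y z =>
    rw [Sym2.mem_iff] at hx
    rw [SimpleGraph.Subgraph.mem_edgeSet] at he
    rcases hx with rfl | rfl
    · exact ⟨z, he, rfl⟩
    · exact ⟨y, he.symm, Sym2.eq_swap⟩

lemma inc_card {C : G.Subgraph} {x : V} (hdeg : (C.neighborSet x).ncard = 2) :
    (inc G C x).card = 2 := by
  set N : Finset V := Finset.univ.filter (fun u => C.Adj x u) with hNdef
  have hN : C.neighborSet x = ↑N := by
    ext u
    simp [hNdef, SimpleGraph.Subgraph.mem_neighborSet]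
  have himg : inc G C x = N.image (fun u => s(x, u)) := by
    ext e
    rw [mem_inc, Finset.mem_image]
    constructor
    · rintro ⟨he, hx⟩
      obtain ⟨b, hb, rfl⟩ := exists_other G he hx
      exact ⟨b, Finset.mem_filter.2 ⟨Finset.mem_univ _, hb⟩, rfl⟩
    · rintro ⟨b, hb, rfl⟩
      exact ⟨SimpleGraph.Subgraph.mem_edgeSet.2 (Finset.mem_filter.1 hb).2,
        Sym2.mem_mk_left _ _⟩
  rw [himg, Finset.card_image_of_injOn (fun u _ u' _ h => Sym2.congr_right.1 h)]
  rw [hN, Set.ncard_coe_finset] at hdeg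
  exact hdeg

lemma hall_cond {C : G.Subgraph} (hdeg : ∀ w ∈ C.verts, (C.neighborSet w).ncard = 2)
    (A : Finset C.verts) : A.card ≤ (A.biUnion (fun a => inc G C a.1)).card := by
  set B := A.biUnion (fun a => inc G C a.1) with hB
  have h2 : ∑ a ∈ A, (inc G C a.1).card = 2 * A.card := by
    rw [Finset.sum_congr rfl (fun a _ => inc_card G (hdeg a.1 a.2)), Finset.sum_const,
      smul_eq_mul, mul_comm]
  have h3 : ∑ a ∈ A, (inc G C a.1).card
      = ∑ e ∈ B, (A.filter (fun a => e ∈ inc G C a.1)).card := by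
    have hstep : ∀ a ∈ A, (inc G C a.1).card = ∑ e ∈ B, if e ∈ inc G C a.1 then 1 else 0 := by
      intro a ha
      rw [← Finset.card_filter]
      congr 1
      ext e
      rw [Finset.mem_filter]
      exact ⟨fun h => ⟨Finset.subset_biUnion_of_mem _ ha h, h⟩, fun h => h.2⟩
    rw [Finset.sum_congr rfl hstep, Finset.sum_comm]
    exact Finset.sum_congr rfl fun e _ => (Finset.card_filter _ _).symm
  have h4 : ∀ e ∈ B, (A.filter (fun a => e ∈ inc G C a.1)).card ≤ 2 := by
    intro e he
    induction e with
    | _ x y =>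
      refine le_trans (Finset.card_le_card_of_injOn (t := ({x, y} : Finset V)) (fun a => a.1) ?_
        (fun a _ b _ h => Subtype.ext h)) ?_
      · intro a ha
        have hmem := (mem_inc G).1 (Finset.mem_filter.1 ha).2
        have := Sym2.mem_iff.1 hmem.2
        rcases this with h | h
        · exact Finset.mem_insert.2 (Or.inl h)
        · exact Finset.mem_insert.2 (Or.inr (Finset.mem_singleton.2 h))
      · exact le_trans (Finset.card_insert_le _ _) (by simp)
  have h5 : ∑ e ∈ B, (A.filter (fun a => e ∈ inc G C a.1)).card ≤ 2 * B.card := by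
    calc ∑ e ∈ B, (A.filter (fun a => e ∈ inc G C a.1)).card ≤ ∑ _e ∈ B, 2 :=
          Finset.sum_le_sum h4
      _ = 2 * B.card := by rw [Finset.sum_const, smul_eq_mul, mul_comm]
  omega

lemma exists_succ {C : G.Subgraph} (hC : IsCycleSub G C) :
    ∃ π : Equiv.Perm V, (∀ w ∈ C.verts, C.Adj w (π w)) ∧ (∀ w ∉ C.verts, π w = w)
      ∧ (∀ w ∈ C.verts, π (π w) ≠ w) := by
  obtain ⟨hconn, hne, hdeg⟩ := hC
  obtain ⟨f, hfinj, hf⟩ :=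
    (Finset.all_card_le_biUnion_card_iff_exists_injective (fun a : C.verts => inc G C a.1)).1
      (hall_cond G hdeg)
  have hspec : ∀ a : C.verts, ∃ b, C.Adj a.1 b ∧ f a = s(a.1, b) := fun a => by
    obtain ⟨h1, h2⟩ := (mem_inc G).1 (hf a)
    exact exists_other G h1 h2
  choose nxt hnadj hfa using hspec
  set nxtS : C.verts → C.verts := fun a => ⟨nxt a, C.edge_vert (hnadj a).symm⟩ with hnxtS
  have hinj : Function.Injective nxtS := by
    intro a a' haa
    by_contra hne'
    set u : C.verts := nxtS a with hu
    have hu' : nxtS a' = u := haa.symm ▸ rfl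
    have hne1 : a.1 ≠ u.1 := (hnadj a).ne
    have hne2 : a'.1 ≠ u.1 := by
      have := (hnadj a').ne
      rw [hu'.symm]; exact this
    have he1 : f a ∈ inc G C u.1 := (mem_inc G).2 ⟨(mem_inc G).1 (hf a) |>.1,
      by rw [hfa a]; exact Sym2.mem_mk_right _ _⟩
    have he2 : f a' ∈ inc G C u.1 := (mem_inc G).2 ⟨(mem_inc G).1 (hf a') |>.1,
      by rw [hfa a']; show (u.1 : V) ∈ _;  rw [← hu']; exact Sym2.mem_mk_right _ _⟩
    have hfne : f a ≠ f a' := fun h => hne' (hfinj h)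
    have hpair : ({f a, f a'} : Finset (Sym2 V)) = inc G C u.1 := by
      refine Finset.eq_of_subset_of_card_le ?_ ?_
      · intro e he'
        rcases Finset.mem_insert.1 he' with rfl | he''
        · exact he1
        · rw [Finset.mem_singleton.1 he'']; exact he2
      · rw [Finset.card_pair hfne, inc_card G (hdeg u.1 u.2)]
    have hfu : f u ∈ ({f a, f a'} : Finset (Sym2 V)) := by
      rw [hpair]
      exact (mem_inc G).2 ⟨(mem_inc G).1 (hf u) |>.1, by rw [hfa u]; exact Sym2.mem_mk_left _ _⟩
    rcases Finset.mem_insert.1 hfu with h | h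
    · exact hne1 (congrArg Subtype.val (hfinj h)).symm
    · exact hne2 (congrArg Subtype.val (hfinj (Finset.mem_singleton.1 h))).symm
  have hbij := Finite.injective_iff_bijective.1 hinj
  set eπ : Equiv.Perm C.verts := Equiv.ofBijective nxtS hbij with heπ
  refine ⟨Equiv.Perm.ofSubtype eπ, ?_, ?_, ?_⟩
  · intro w hw
    rw [Equiv.Perm.ofSubtype_apply_of_mem eπ hw]
    exact hnadj ⟨w, hw⟩
  · intro w hw
    exact Equiv.Perm.ofSubtype_apply_of_not_mem eπ hw
  · intro w hw h
    have h1 : Equiv.Perm.ofSubtype eπ w = (nxtS ⟨w, hw⟩).1 :=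
      Equiv.Perm.ofSubtype_apply_of_mem eπ hw
    have h2 : Equiv.Perm.ofSubtype eπ ((nxtS ⟨w, hw⟩).1) = (nxtS (nxtS ⟨w, hw⟩)).1 :=
      Equiv.Perm.ofSubtype_apply_of_mem eπ (nxtS ⟨w, hw⟩).2
    rw [h1, h2] at h
    have h3 : nxtS (nxtS ⟨w, hw⟩) = ⟨w, hw⟩ := Subtype.ext h
    have h4 : f (nxtS ⟨w, hw⟩) = f ⟨w, hw⟩ := by
      rw [hfa, hfa]
      have : nxt (nxtS ⟨w, hw⟩) = (⟨w, hw⟩ : C.verts).1 := congrArg Subtype.val h3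
      rw [this]
      exact Sym2.eq_swap
    have h5 := hfinj h4
    have h6 : nxt ⟨w, hw⟩ = w := congrArg Subtype.val h5
    exact (hnadj ⟨w, hw⟩).ne h6.symm


lemma exists_perm_rep {v : V} {C : G.Subgraph} (hC : IsCycleSub G C) (hv : v ∈ C.verts) :
    ∃ c ∈ K3g G v, Cyc G c = C := by
  obtain ⟨π, h1, h2, h3⟩ := exists_succ G hC
  obtain ⟨hconn, hvne, hdeg⟩ := hC
  have hπv : π v ≠ v := fun h => (C.adj_sub (h1 v hv)).ne' h
  have hvsupp : v ∈ π.support := Equiv.Perm.mem_support.2 hπv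
  set c₀ := π.cycleOf v with hc₀
  have hcyc : c₀.IsCycle := Equiv.Perm.isCycle_cycleOf π hπv
  have hvc₀ : v ∈ c₀.support :=
    Equiv.Perm.mem_support_cycleOf_iff.2 ⟨Equiv.Perm.SameCycle.refl _ _, hvsupp⟩
  -- verts are closed under π and π⁻¹
  have hfwd : ∀ w ∈ C.verts, π w ∈ C.verts := fun w hw => C.edge_vert (h1 w hw).symm
  have hbwd : ∀ w ∈ C.verts, π⁻¹ w ∈ C.verts := by
    intro w hw
    by_contra hcon
    have := h2 _ hcon
    rw [Equiv.Perm.apply_inv_self] at this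
    rw [← this] at hcon
    exact hcon hw
  have hπne : ∀ w ∈ C.verts, π w ≠ π⁻¹ w := by
    intro w hw h
    exact h3 w hw (by rw [h, Equiv.Perm.apply_inv_self])
  -- neighbor sets
  have hnbr : ∀ w ∈ C.verts, C.neighborSet w = {π w, π⁻¹ w} := by
    intro w hw
    have hsubs : ({π w, π⁻¹ w} : Set V) ⊆ C.neighborSet w := by
      rintro u (rfl | hu)
      · exact h1 w hw
      · rw [Set.mem_singleton_iff] at hu
        subst hu
        have := h1 _ (hbwd w hw)
        rw [Equiv.Perm.apply_inv_self] at this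
        exact this.symm
    have hcard2 : ({π w, π⁻¹ w} : Set V).ncard = 2 := Set.ncard_pair (hπne w hw)
    exact (Set.eq_of_subset_of_ncard_le hsubs (by rw [hdeg w hw, hcard2])
      (Set.toFinite _)).symm
  -- support of c₀ equals verts
  have hsub : ∀ w, w ∈ c₀.support → w ∈ C.verts := by
    intro w hw
    have : w ∈ π.support := Equiv.Perm.support_cycleOf_le π v hw
    by_contra hcon
    exact (Equiv.Perm.mem_support.1 this) (h2 w hcon)
  have hcl : ∀ (a b : C.verts), C.coe.Walk a b → π.SameCycle v a.1 → π.SameCycle v b.1 := by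
    intro a b p
    induction p with
    | nil => exact id
    | @cons x y z h q ih =>
      intro hx
      refine ih ?_
      have hadj : C.Adj x.1 y.1 := h
      have : y.1 ∈ C.neighborSet x.1 := hadj
      rw [hnbr x.1 x.2] at this
      rcases this with h' | h'
      · exact hx.trans (h' ▸ ⟨1, by simp⟩)
      · rw [Set.mem_singleton_iff] at h'
        exact hx.trans (h' ▸ ⟨-1, by simp⟩)
  have hverts : (↑c₀.support : Set V) = C.verts := by
    apply Set.eq_of_subset_of_subset
    · intro w hw
      exact hsub w (Finset.mem_coe.1 hw)
    · intro w hw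
      obtain ⟨p⟩ := hconn.preconnected ⟨v, hv⟩ ⟨w, hw⟩
      have hsame := hcl _ _ p (Equiv.Perm.SameCycle.refl _ _)
      exact Finset.mem_coe.2 (Equiv.Perm.mem_support_cycleOf_iff.2 ⟨hsame, hvsupp⟩)
  -- c₀ agrees with π on its support
  have happ : ∀ w ∈ c₀.support, c₀ w = π w := by
    intro w hw
    exact (Equiv.Perm.mem_support_cycleOf_iff.1 hw).1.cycleOf_apply
  have hinvmem : ∀ w ∈ c₀.support, π⁻¹ w ∈ c₀.support := by
    intro w hw
    have hsame := (Equiv.Perm.mem_support_cycleOf_iff.1 hw).1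
    refine Equiv.Perm.mem_support_cycleOf_iff.2 ⟨hsame.trans ⟨-1, by simp⟩, hvsupp⟩
  have happinv : ∀ w ∈ c₀.support, c₀⁻¹ w = π⁻¹ w := by
    intro w hw
    have h4 : c₀ (π⁻¹ w) = π (π⁻¹ w) := happ _ (hinvmem w hw)
    rw [Equiv.Perm.apply_inv_self] at h4
    nth_rewrite 1 [← h4]
    rw [Equiv.Perm.inv_apply_self]
  -- cardinality
  have hcard3 : 3 ≤ c₀.support.card := by
    have hsub3 : ({v, π v, π⁻¹ v} : Set V) ⊆ C.verts := by
      rintro u (rfl | rfl | hu)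
      · exact hv
      · exact hfwd v hv
      · rw [Set.mem_singleton_iff] at hu
        subst hu
        exact hbwd v hv
    have hne1 : v ∉ ({π v, π⁻¹ v} : Set V) := by
      rintro (h | h)
      · exact hπv h.symm
      · rw [Set.mem_singleton_iff] at h
        exact hπv ((congrArg π h).trans (Equiv.Perm.apply_inv_self π v))
    have h33 : ({v, π v, π⁻¹ v} : Set V).ncard = 3 := by
      rw [Set.ncard_insert_of_notMem hne1 (Set.toFinite _), Set.ncard_pair (hπne v hv)]
    have := Set.ncard_le_ncard hsub3 (Set.toFinite _)
    rw [h33] at this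
    rwa [← hverts, Set.ncard_coe_finset] at this
  have hmem3g : c₀ ∈ K3g G v := by
    refine Finset.mem_filter.2 ⟨Finset.mem_filter.2 ⟨Finset.mem_univ _, hcyc, hvc₀, hcard3⟩, ?_⟩
    intro w hw
    rw [happ w hw]
    exact C.adj_sub (h1 w (hsub w hw))
  refine ⟨c₀, hmem3g, ?_⟩
  refine SimpleGraph.Subgraph.ext ?_ ?_
  · exact hverts
  · ext w u
    show G.Adj w u ∧ _ ↔ C.Adj w u
    constructor
    · rintro ⟨hG, ⟨hws, rfl⟩ | ⟨hus, hcu⟩⟩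
      · rw [happ w hws]
        exact h1 w (hsub w hws)
      · have : C.Adj u (c₀ u) := by
          rw [happ u hus]
          exact h1 u (hsub u hus)
        rw [← hcu] at this
        exact this.symm
    · intro hadj
      have hws : w ∈ c₀.support := by
        have : w ∈ C.verts := C.edge_vert hadj
        rw [← hverts] at this
        exact Finset.mem_coe.1 this
      have : u ∈ C.neighborSet w := hadj
      rw [hnbr w (hsub w hws)] at this
      rcases this with h' | h'
      · exact ⟨C.adj_sub hadj, Or.inl ⟨hws, by rw [happ w hws]; exact h'⟩⟩
      · rw [Set.mem_singleton_iff] at h'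
        have hu : u = c₀⁻¹ w := by rw [happinv w hws]; exact h'
        refine ⟨C.adj_sub hadj, Or.inr ⟨?_, ?_⟩⟩
        · rw [hu]
          exact good_inv_mem hws
        · rw [hu, Equiv.Perm.apply_inv_self]


lemma fiber_eq {v : V} {C : G.Subgraph} (hC : IsCycleSub G C) (hv : v ∈ C.verts) :
    ((K3g G v).filter (fun c => Cyc G c = C)).card = 2 := by
  obtain ⟨c₀, hc₀, hCyc₀⟩ := exists_perm_rep G hC hv
  have hset : (K3g G v).filter (fun c => Cyc G c = C) = {c₀, c₀⁻¹} := by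
    ext c
    rw [Finset.mem_filter, Finset.mem_insert, Finset.mem_singleton]
    constructor
    · rintro ⟨hc, hCyc⟩
      have spec := K3g_spec G hc
      have hvmem : v ∈ c.support := spec.2.1
      have hadj : (Cyc G c).Adj v (c v) := ⟨spec.2.2.2 v hvmem, Or.inl ⟨hvmem, rfl⟩⟩
      rw [hCyc, ← hCyc₀] at hadj
      have hmem : c v ∈ (Cyc G c₀).neighborSet v := hadj
      rw [cyc_nbhd G hc₀ (K3g_spec G hc₀).2.1] at hmem
      rcases hmem with h | h
      · exact Or.inl (unique_eq G hc₀ hc (hCyc.trans hCyc₀.symm) h)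
      · rw [Set.mem_singleton_iff] at h
        refine Or.inr (unique_eq G (K3g_inv G hc₀) hc ?_ h)
        rw [hCyc, ← hCyc₀, Cyc_inv]
    · rintro (rfl | rfl)
      · exact ⟨hc₀, hCyc₀⟩
      · exact ⟨K3g_inv G hc₀, (Cyc_inv G c₀).trans hCyc₀⟩
  rw [hset, Finset.card_pair (K3g_ne_inv G hc₀)]

lemma step3 (v : V) :
    ∑ c ∈ K3g G v, psi (delSub (lapMat (Polynomial ℤ) G) ↑c.support)
      = 2 * ∑ᶠ C ∈ {C : G.Subgraph | IsCycleSub G C ∧ v ∈ C.verts},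
          psi (delSub (lapMat (Polynomial ℤ) G) C.verts) := by
  set img := (K3g G v).image (Cyc G) with himg
  have hsetEq : {C : G.Subgraph | IsCycleSub G C ∧ v ∈ C.verts} = ↑img := by
    ext C
    simp only [Set.mem_setOf_eq, himg, Finset.coe_image, Set.mem_image, Finset.mem_coe]
    constructor
    · rintro ⟨hh1, hh2⟩
      obtain ⟨c, hc, hCyc⟩ := exists_perm_rep G hh1 hh2
      exact ⟨c, hc, hCyc⟩
    · rintro ⟨c, hc, rfl⟩
      exact cyc_isCycleSub G hc
  rw [hsetEq, finsum_mem_coe_finset]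
  have hfib := Finset.sum_fiberwise_of_maps_to (s := K3g G v) (t := img) (g := Cyc G)
    (fun c hc => Finset.mem_image_of_mem _ hc)
    (fun c => psi (delSub (lapMat (Polynomial ℤ) G) (↑c.support : Set V)))
  rw [← hfib, Finset.mul_sum]
  refine Finset.sum_congr rfl fun C hC => ?_
  obtain ⟨c1, hc1, hCyc1⟩ := Finset.mem_image.1 hC
  have hCprop : IsCycleSub G C ∧ v ∈ C.verts := hCyc1 ▸ cyc_isCycleSub G hc1
  have hterm : ∀ c ∈ (K3g G v).filter (fun c => Cyc G c = C),
      psi (delSub (lapMat (Polynomial ℤ) G) (↑c.support : Set V))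
        = psi (delSub (lapMat (Polynomial ℤ) G) C.verts) := by
    intro c hc
    refine psi_delSub_congr _ ?_
    have hh := congrArg SimpleGraph.Subgraph.verts (Finset.mem_filter.1 hc).2
    rw [Cyc_verts] at hh
    exact hh
  rw [Finset.sum_congr rfl hterm, Finset.sum_const, fiber_eq G hCprop.1 hCprop.2]
  exact (two_smul _ _).trans (two_mul _).symm

end LPR

theorem laplacian_permanental_vertex_recursion
    {V : Type*} [Fintype V] [DecidableEq V]
    (G : SimpleGraph V) [DecidableRel G.Adj] (v : V) :
    psi (lapMat (Polynomial ℤ) G) =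
      (Polynomial.X - (G.degree v : Polynomial ℤ)) * psi (delSub (lapMat (Polynomial ℤ) G) {v})
        + ∑ u ∈ G.neighborFinset v, psi (delSub (lapMat (Polynomial ℤ) G) {u, v})
        + 2 * ∑ᶠ C ∈ {C : G.Subgraph | IsCycleSub G C ∧ v ∈ C.verts},
          psi (delSub (lapMat (Polynomial ℤ) G) C.verts) := by
  rw [LPR.step2 G v, LPR.step3 G v]
end
end

section
/- Let G be a simple graph on a finite vertex type and let v be a vertex of G. Then the characteristic polynomial of the adjacency matrix satisfies φ(A(G)) = x·φ(A(G − v)) − Σ_{u ∈ N(v)} φ(A(G − u − v)) − 2·Σ_{C ∈ 𝔠_G(v)} φ(A(G − V(C))), where G − S denotes the subgraph of G induced on the vertices outside S. -/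
open Polynomial Matrix

attribute [local instance] Classical.propDecidable

noncomputable section

variable {V : Type*}

variable [Fintype V] [DecidableEq V]

namespace SchwenkAux

open Equiv Equiv.Perm Finset

variable {V : Type*} [Fintype V] [DecidableEq V]

theorem phi_delSub_congr {R : Type*} [CommRing R] (M : Matrix V V (Polynomial R))
    {S S' : Set V} (h : S = S') : phi (delSub M S) = phi (delSub M S') := by
  subst h; rfl

theorem phi_delSub_det {R : Type*} [CommRing R] (M : Matrix V V (Polynomial R)) (S : Set V) :
    phi (delSub M S) =
      (delSub ((Polynomial.X : Polynomial R) • (1 : Matrix V V (Polynomial R)) - M) S).det := by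
  unfold phi delSub
  congr 1
  ext i j
  simp [Matrix.submatrix_apply, Matrix.sub_apply, Matrix.smul_apply, Matrix.one_apply,
    Subtype.val_inj]

instance subgraphFinite (G : SimpleGraph V) : Finite G.Subgraph := by
  have : Function.Injective (fun C : G.Subgraph => (C.verts, C.Adj)) := by
    intro a b h
    simp only [Prod.mk.injEq] at h
    exact SimpleGraph.Subgraph.ext h.1 h.2
  exact Finite.of_injective _ this


theorem mem_support_iff_pow {c : Equiv.Perm V} (hc : c.IsCycle) {v w : V}
    (hv : v ∈ c.support) : w ∈ c.support ↔ ∃ n : ℕ, (c ^ n) v = w := by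
  constructor
  · intro hw
    obtain ⟨n, _, hn⟩ :=
      (hc.sameCycle (mem_support.mp hv) (mem_support.mp hw)).exists_pow_eq'
    exact ⟨n, hn⟩
  · rintro ⟨n, rfl⟩
    exact pow_apply_mem_support.mpr hv

theorem sq_ne {c : Equiv.Perm V} (hc : c.IsCycle) (h3 : 3 ≤ c.support.card) {w : V}
    (hw : w ∈ c.support) : c (c w) ≠ w := by
  intro h
  have key : ∀ n : ℕ, (c ^ n) w = w ∨ (c ^ n) w = c w := by
    intro n
    induction n with
    | zero => exact Or.inl rfl
    | succ n ih =>
      rw [pow_succ', Equiv.Perm.mul_apply]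
      rcases ih with h1 | h1
      · rw [h1]; exact Or.inr rfl
      · rw [h1, h]; exact Or.inl rfl
  have hsub : c.support ⊆ {w, c w} := by
    intro y hy
    obtain ⟨n, _, hn⟩ :=
      (hc.sameCycle (mem_support.mp hw) (mem_support.mp hy)).exists_pow_eq'
    rcases key n with h1 | h1 <;> rw [hn] at h1 <;> simp [h1]
  have := (Finset.card_le_card hsub).trans (Finset.card_insert_le _ _)
  simp at this
  omega
variable (G : SimpleGraph V)

def toCyc (c : Equiv.Perm V) : G.Subgraph where
  verts := ↑c.support
  Adj a b := G.Adj a b ∧ (c a = b ∨ c b = a)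
  adj_sub h := h.1
  edge_vert {a b} h := by
    rcases h.2 with h2 | h2
    · have : c a ≠ a := by rw [h2]; exact h.1.ne'
      exact Finset.mem_coe.mpr (mem_support.mpr (fun hh => this (by rw [hh])))
    · have hb : b ∈ c.support := mem_support.mpr (fun hh => h.1.ne' (by rw [← h2, hh]))
      have := apply_mem_support.mpr hb
      rw [h2] at this
      exact Finset.mem_coe.mpr this
  symm := by
    constructor
    intro a b h
    exact ⟨h.1.symm, h.2.symm⟩

def cycP (v : V) : Finset (Equiv.Perm V) :=
  Finset.univ.filter fun c : Equiv.Perm V =>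
    c.IsCycle ∧ v ∈ c.support ∧ 3 ≤ c.support.card ∧ ∀ i ∈ c.support, G.Adj (c i) i

theorem mem_cycP {v : V} {c : Equiv.Perm V} :
    c ∈ cycP G v ↔
      c.IsCycle ∧ v ∈ c.support ∧ 3 ≤ c.support.card ∧ ∀ i ∈ c.support, G.Adj (c i) i := by
  simp [cycP]

theorem toCyc_verts (c : Equiv.Perm V) : (toCyc G c).verts = ↑c.support := rfl

theorem toCyc_adj (c : Equiv.Perm V) (a b : V) :
    (toCyc G c).Adj a b ↔ G.Adj a b ∧ (c a = b ∨ c b = a) := Iff.rfl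

theorem toCyc_neighborSet {v : V} {c : Equiv.Perm V} (hc : c ∈ cycP G v) {w : V}
    (hw : w ∈ c.support) :
    (toCyc G c).neighborSet w = {c w, c⁻¹ w} := by
  obtain ⟨hcyc, hv, h3, hadj⟩ := (mem_cycP G).mp hc
  ext x
  simp only [SimpleGraph.Subgraph.mem_neighborSet, toCyc_adj, Set.mem_insert_iff,
    Set.mem_singleton_iff]
  constructor
  · rintro ⟨h1, h2 | h2⟩
    · exact Or.inl h2.symm
    · exact Or.inr (by rw [← h2, Equiv.Perm.inv_apply_self])
  · rintro (rfl | rfl)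
    · exact ⟨(hadj w hw).symm, Or.inl rfl⟩
    · refine ⟨?_, Or.inr (Equiv.Perm.apply_inv_self c w)⟩
      have hwi : c⁻¹ w ∈ c.support := by
        rw [← Equiv.Perm.support_inv]
        rw [← Equiv.Perm.support_inv] at hw
        exact apply_mem_support.mpr hw
      have := hadj _ hwi
      rw [Equiv.Perm.apply_inv_self] at this
      exact this

theorem toCyc_isCycleSub {v : V} {c : Equiv.Perm V} (hc : c ∈ cycP G v) :
    IsCycleSub G (toCyc G c) ∧ v ∈ (toCyc G c).verts := by
  obtain ⟨hcyc, hv, h3, hadj⟩ := (mem_cycP G).mp hc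
  have hvv : v ∈ (toCyc G c).verts := Finset.mem_coe.mpr hv
  refine ⟨⟨?_, ⟨v, hvv⟩, ?_⟩, hvv⟩
  · -- Connected
    have adjstep : ∀ w ∈ c.support, (toCyc G c).Adj w (c w) := by
      intro w hw
      exact ⟨(hadj w hw).symm, Or.inl rfl⟩
    have reach : ∀ n : ℕ,
        (toCyc G c).coe.Reachable ⟨v, hvv⟩ ⟨(c ^ n) v, Finset.mem_coe.mpr
          (pow_apply_mem_support.mpr hv)⟩ := by
      intro n
      induction n with
      | zero => exact SimpleGraph.Reachable.refl _
      | succ n ih =>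
        refine ih.trans (SimpleGraph.Adj.reachable ?_)
        rw [SimpleGraph.Subgraph.coe_adj]
        have : (c ^ (n + 1)) v = c ((c ^ n) v) := by
          rw [pow_succ', Equiv.Perm.mul_apply]
        simp only [this]
        exact adjstep _ (pow_apply_mem_support.mpr hv)
    rw [SimpleGraph.Subgraph.connected_iff]
    refine ⟨⟨?_⟩, ⟨v, hvv⟩⟩
    rintro ⟨a, ha⟩ ⟨b, hb⟩
    obtain ⟨n, hn⟩ := (mem_support_iff_pow hcyc hv).mp (Finset.mem_coe.mp ha)
    obtain ⟨m, hm⟩ := (mem_support_iff_pow hcyc hv).mp (Finset.mem_coe.mp hb)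
    subst hn; subst hm
    exact (reach n).symm.trans (reach m)
  · -- degrees
    intro w hw
    rw [toCyc_neighborSet G hc (Finset.mem_coe.mp hw)]
    refine Set.ncard_pair ?_
    intro h
    have : c (c w) = w := by
      conv_lhs => rw [h]
      exact Equiv.Perm.apply_inv_self c w
    exact sq_ne hcyc h3 (Finset.mem_coe.mp hw) this
theorem inv_mem_cycP {v : V} {c : Equiv.Perm V} (hc : c ∈ cycP G v) : c⁻¹ ∈ cycP G v := by
  obtain ⟨hcyc, hv, h3, hadj⟩ := (mem_cycP G).mp hc
  rw [mem_cycP]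
  refine ⟨hcyc.inv, by simpa using hv, by simpa using h3, ?_⟩
  intro i hi
  rw [Equiv.Perm.support_inv] at hi
  have hwi : c⁻¹ i ∈ c.support := by
    rw [← Equiv.Perm.support_inv]
    rw [← Equiv.Perm.support_inv] at hi
    exact apply_mem_support.mpr hi
  have := hadj _ hwi
  rw [Equiv.Perm.apply_inv_self] at this
  exact this.symm

theorem toCyc_inv (c : Equiv.Perm V) : toCyc G c⁻¹ = toCyc G c := by
  refine SimpleGraph.Subgraph.ext ?_ ?_
  · simp [toCyc_verts]
  · ext a b
    simp only [toCyc_adj]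
    constructor
    · rintro ⟨h1, h2 | h2⟩
      · exact ⟨h1, Or.inr (by rw [← h2, Equiv.Perm.apply_inv_self])⟩
      · exact ⟨h1, Or.inl (by rw [← h2, Equiv.Perm.apply_inv_self])⟩
    · rintro ⟨h1, h2 | h2⟩
      · exact ⟨h1, Or.inr (by rw [← h2, Equiv.Perm.inv_apply_self])⟩
      · exact ⟨h1, Or.inl (by rw [← h2, Equiv.Perm.inv_apply_self])⟩

theorem inv_ne_self {v : V} {c : Equiv.Perm V} (hc : c ∈ cycP G v) : c⁻¹ ≠ c := by
  obtain ⟨hcyc, hv, h3, _⟩ := (mem_cycP G).mp hc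
  intro h
  have h2 : c v = c⁻¹ v := by rw [h]
  have : c (c v) = v := by rw [h2, Equiv.Perm.apply_inv_self]
  exact sq_ne hcyc h3 hv this

theorem agree {v : V} {c c' : Equiv.Perm V} (hc : c ∈ cycP G v) (hc' : c' ∈ cycP G v)
    (hsupp : c'.support = c.support)
    (hnbr : ∀ w ∈ c.support, ({c' w, c'⁻¹ w} : Set V) = {c w, c⁻¹ w})
    (hv0 : c' v = c v) : c' = c := by
  obtain ⟨hcyc, hv, h3, _⟩ := (mem_cycP G).mp hc
  obtain ⟨hcyc', _, _, _⟩ := (mem_cycP G).mp hc'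
  have h3' : 3 ≤ c'.support.card := by rw [hsupp]; exact h3
  have step : ∀ n : ℕ, c' ((c ^ n) v) = (c ^ (n + 1)) v := by
    intro n
    induction n with
    | zero => simpa using hv0
    | succ n ih =>
      set w := (c ^ (n + 1)) v with hwdef
      have hw : w ∈ c.support := pow_apply_mem_support.mpr hv
      have hmem : c' w ∈ ({c w, c⁻¹ w} : Set V) := by
        rw [← hnbr w hw]; exact Or.inl rfl
      have hpred : c'⁻¹ w = (c ^ n) v := by
        rw [← ih, Equiv.Perm.inv_apply_self]
      have hcpred : c⁻¹ w = (c ^ n) v := by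
        rw [hwdef, pow_succ', Equiv.Perm.mul_apply, Equiv.Perm.inv_apply_self]
      rcases hmem with h1 | h1
      · rw [h1, hwdef, ← Equiv.Perm.mul_apply, ← pow_succ']
      · exfalso
        rw [Set.mem_singleton_iff] at h1
        have : c' (c' w) = w := by
          rw [h1, hcpred, ← hpred, Equiv.Perm.apply_inv_self]
        exact sq_ne hcyc' h3' (by rw [hsupp]; exact hw) this
  ext w
  by_cases hw : w ∈ c.support
  · obtain ⟨n, rfl⟩ := (mem_support_iff_pow hcyc hv).mp hw
    rw [step n, pow_succ', Equiv.Perm.mul_apply]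
  · have hw' : w ∉ c'.support := by rw [hsupp]; exact hw
    rw [notMem_support.mp hw, notMem_support.mp hw']

theorem toCyc_inj {v : V} {c c' : Equiv.Perm V} (hc : c ∈ cycP G v) (hc' : c' ∈ cycP G v)
    (h : toCyc G c' = toCyc G c) : c' = c ∨ c' = c⁻¹ := by
  have hsupp : c'.support = c.support := by
    have := congrArg SimpleGraph.Subgraph.verts h
    rw [toCyc_verts, toCyc_verts] at this
    exact Finset.coe_injective this
  obtain ⟨hcyc, hv, h3, _⟩ := (mem_cycP G).mp hc
  have hnbr : ∀ w ∈ c.support, ({c' w, c'⁻¹ w} : Set V) = {c w, c⁻¹ w} := by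
    intro w hw
    rw [← toCyc_neighborSet G hc' (by rw [hsupp]; exact hw), ← toCyc_neighborSet G hc hw, h]
  have hv0 : c' v ∈ ({c v, c⁻¹ v} : Set V) := by
    rw [← hnbr v hv]; exact Or.inl rfl
  rcases hv0 with h1 | h1
  · exact Or.inl (agree G hc hc' hsupp hnbr h1)
  · rw [Set.mem_singleton_iff] at h1
    refine Or.inr (agree G (inv_mem_cycP G hc) hc' ?_ ?_ h1)
    · rw [hsupp, Equiv.Perm.support_inv]
    · intro w hw
      rw [Equiv.Perm.support_inv] at hw
      rw [hnbr w hw, inv_inv, Set.pair_comm]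
def nextV (C : G.Subgraph) (w p : V) : V :=
  if h : ∃ q, q ≠ p ∧ C.neighborSet w = {p, q} then h.choose else w

theorem nextV_spec {C : G.Subgraph} {w p : V}
    (hdeg : (C.neighborSet w).ncard = 2) (hp : p ∈ C.neighborSet w) :
    nextV G C w p ≠ p ∧ C.neighborSet w = {p, nextV G C w p} := by
  have h : ∃ q, q ≠ p ∧ C.neighborSet w = {p, q} := by
    obtain ⟨a, b, hab, hset⟩ := Set.ncard_eq_two.mp hdeg
    rw [hset] at hp
    rcases hp with rfl | rfl
    · exact ⟨b, hab.symm, hset⟩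
    · exact ⟨a, hab, by rw [hset, Set.pair_comm]⟩
  rw [nextV, dif_pos h]
  exact ⟨h.choose_spec.1, h.choose_spec.2⟩

theorem nextV_mem {C : G.Subgraph} {w p : V}
    (hdeg : (C.neighborSet w).ncard = 2) (hp : p ∈ C.neighborSet w) :
    nextV G C w p ∈ C.neighborSet w := by
  rw [(nextV_spec G hdeg hp).2]; exact Or.inr rfl

theorem nextV_unique {C : G.Subgraph} {w p q : V}
    (hdeg : (C.neighborSet w).ncard = 2) (hp : p ∈ C.neighborSet w)
    (hq : q ∈ C.neighborSet w) (hqp : q ≠ p) : q = nextV G C w p := by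
  rw [(nextV_spec G hdeg hp).2] at hq
  rcases hq with rfl | rfl
  · exact absurd rfl hqp
  · rfl

theorem nextV_invol {C : G.Subgraph} {w p : V}
    (hdeg : (C.neighborSet w).ncard = 2) (hp : p ∈ C.neighborSet w) :
    nextV G C w (nextV G C w p) = p := by
  exact (nextV_unique G hdeg (nextV_mem G hdeg hp) hp
    (Ne.symm (nextV_spec G hdeg hp).1)).symm
theorem exists_perm_of_isCycleSub {v : V} {C : G.Subgraph} (hC : IsCycleSub G C)
    (hv : v ∈ C.verts) : ∃ c ∈ cycP G v, toCyc G c = C := by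
  obtain ⟨hconn, -, hdeg⟩ := hC
  have hnbrv : (C.neighborSet v).Nonempty := by
    apply Set.nonempty_of_ncard_ne_zero
    rw [hdeg v hv]; norm_num
  set a₀ := hnbrv.choose with ha₀def
  have ha₀ : C.Adj v a₀ := hnbrv.choose_spec
  set step : V × V → V × V := fun pr => (pr.2, nextV G C pr.2 pr.1) with hstep
  set g : ℕ → V × V := fun n => step^[n] (v, a₀) with hgdef
  have hg0 : g 0 = (v, a₀) := rfl
  have hgsucc : ∀ n, g (n + 1) = step (g n) := by
    intro n; rw [hgdef]; simp only [Function.iterate_succ_apply']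
  set f : ℕ → V := fun n => (g n).1 with hfdef
  have hfs : ∀ n, f (n + 1) = (g n).2 := by
    intro n; show (g (n+1)).1 = (g n).2; rw [hgsucc]
  have Hg : ∀ n, (g n).1 ∈ C.verts ∧ C.Adj (g n).1 (g n).2 := by
    intro n
    induction n with
    | zero => exact ⟨hv, ha₀⟩
    | succ n ih =>
      rw [hgsucc]
      exact ⟨ih.2.snd_mem, nextV_mem G (hdeg _ ih.2.snd_mem) ih.2.symm⟩
  have HAdj : ∀ n, C.Adj (f n) (f (n + 1)) := by
    intro n; rw [hfs]; exact (Hg n).2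
  have Hmem : ∀ n, f n ∈ C.verts := fun n => (Hg n).1
  have Hnext : ∀ n, f (n + 2) = nextV G C (f (n + 1)) (f n) := by
    intro n
    have h1 : f (n + 2) = (g (n + 1)).2 := hfs (n + 1)
    rw [h1, hgsucc n, hfs n]
  have Hne2 : ∀ n, f (n + 2) ≠ f n := by
    intro n
    rw [Hnext n]
    exact (nextV_spec G (hdeg _ (Hmem (n+1))) (HAdj n).symm).1
  have Hback1 : ∀ n m, g (n + 1) = g (m + 1) → g n = g m := by
    intro n m h
    rw [hgsucc, hgsucc] at h
    have h2 : (g n).2 = (g m).2 := congrArg Prod.fst h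
    have h1 : nextV G C (g n).2 (g n).1 = nextV G C (g m).2 (g m).1 := congrArg Prod.snd h
    rw [h2] at h1
    have hw : (g m).2 ∈ C.verts := (Hg m).2.snd_mem
    have hpn : (g n).1 ∈ C.neighborSet (g m).2 := by rw [← h2]; exact (Hg n).2.symm
    have hpm : (g m).1 ∈ C.neighborSet (g m).2 := (Hg m).2.symm
    have h3 := congrArg (nextV G C (g m).2) h1
    rw [nextV_invol G (hdeg _ hw) hpn, nextV_invol G (hdeg _ hw) hpm] at h3
    exact Prod.ext h3 h2
  have Hback : ∀ t n m, g (n + t) = g (m + t) → g n = g m := by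
    intro t
    induction t with
    | zero => intro n m h; exact h
    | succ t ih => intro n m h; exact ih n m (Hback1 _ _ h)
  have hper0 : ∃ m, 0 < m ∧ g m = g 0 := by
    obtain ⟨i, j, hne, h⟩ := Finite.exists_ne_map_eq_of_infinite g
    rcases Nat.lt_or_ge i j with hij | hij
    · refine ⟨j - i, by omega, Hback i _ _ ?_⟩
      have e1 : j - i + i = j := by omega
      rw [e1, Nat.zero_add]; exact h.symm
    · have hij' : j < i := by omega
      refine ⟨i - j, by omega, Hback j _ _ ?_⟩
      have e1 : i - j + j = i := by omega
      rw [e1, Nat.zero_add]; exact h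
  set k := Nat.find hper0 with hkdef
  have hk : 0 < k ∧ g k = g 0 := Nat.find_spec hper0
  have Hmin : ∀ m, m < k → ¬(0 < m ∧ g m = g 0) := fun m hm => Nat.find_min hper0 hm
  have Hper : ∀ n, g (n + k) = g n := by
    intro n
    induction n with
    | zero => rw [Nat.zero_add]; exact hk.2
    | succ n ih =>
      have e : n + 1 + k = (n + k) + 1 := by omega
      rw [e, hgsucc, hgsucc, ih]
  have fper : ∀ n, f (n + k) = f n := fun n => congrArg Prod.fst (Hper n)
  have fmodaux : ∀ q r, f (r + q * k) = f r := by
    intro q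
    induction q with
    | zero => intro r; simp
    | succ q ih =>
      intro r
      have e : r + (q + 1) * k = (r + q * k) + k := by ring
      rw [e, fper, ih]
  have fmod : ∀ n, f n = f (n % k) := by
    intro n
    conv_lhs => rw [← Nat.mod_add_div' n k]
    exact fmodaux _ _
  have Hdvd : ∀ t, g t = g 0 → k ∣ t := by
    intro t
    induction t using Nat.strong_induction_on with
    | _ t ih =>
      intro ht
      rcases Nat.eq_zero_or_pos t with rfl | htpos
      · exact Dvd.intro 0 rfl
      rcases Nat.lt_or_ge t k with hlt | hge
      · exact absurd ⟨htpos, ht⟩ (Hmin t hlt)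
      · have e : t - k + k = t := by omega
        have h2 : g (t - k) = g 0 := by rw [← Hper (t - k), e]; exact ht
        have hdvd := ih (t - k) (by omega) h2
        have h3 : k ∣ (t - k) + k := Nat.dvd_add hdvd dvd_rfl
        rwa [e] at h3
  have Hgne : ∀ a b, a ≤ b → g a = g b → k ∣ b - a := by
    intro a b hab h
    apply Hdvd
    apply Hback a
    have e : b - a + a = b := by omega
    rw [e, Nat.zero_add]; exact h.symm
  have k3 : 3 ≤ k := by
    have k1 : k ≠ 1 := by
      intro h1
      have : f 1 = f 0 := congrArg Prod.fst (h1 ▸ hk.2)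
      have h2 : f 1 = a₀ := hfs 0
      have h3 : f 0 = v := rfl
      rw [h2, h3] at this
      exact ha₀.adj_sub.ne' this
    have k2 : k ≠ 2 := by
      intro h2
      have : f 2 = f 0 := congrArg Prod.fst (h2 ▸ hk.2)
      exact Hne2 0 this
    omega
  have Hdist : ∀ d, d < k → 0 < d → ∀ i, f (i + d) ≠ f i := by
    intro d
    induction d using Nat.strong_induction_on with
    | _ d ih =>
      intro hdk hd1 i h
      rcases Nat.lt_or_ge d 3 with hd3 | hd3
      · interval_cases d
        · exact (HAdj i).adj_sub.ne' h
        · exact Hne2 i h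
      -- d ≥ 3
      have hwv : f i ∈ C.verts := Hmem i
      have hdw := hdeg _ hwv
      have hik : f (i + k) = f i := fper i
      have hid : f (i + d) = f i := h
      have hp1adj : C.Adj (f (i + k - 1)) (f i) := by
        have e : i + k - 1 + 1 = i + k := by omega
        have h0 := HAdj (i + k - 1)
        rw [e, hik] at h0; exact h0
      have hp2adj : C.Adj (f (i + d - 1)) (f i) := by
        have e : i + d - 1 + 1 = i + d := by omega
        have h0 := HAdj (i + d - 1)
        rw [e, hid] at h0; exact h0
      have hp1 : f (i + k - 1) ∈ C.neighborSet (f i) := hp1adj.symm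
      have hp2 : f (i + d - 1) ∈ C.neighborSet (f i) := hp2adj.symm
      have hp12 : f (i + k - 1) ≠ f (i + d - 1) := by
        intro heq
        have e2 : (g (i + d - 1)).2 = (g (i + k - 1)).2 := by
          rw [← hfs, ← hfs]
          have e : i + d - 1 + 1 = i + d := by omega
          have e' : i + k - 1 + 1 = i + k := by omega
          rw [e, e', hid, hik]
        have hg12 : g (i + d - 1) = g (i + k - 1) := Prod.ext heq.symm e2
        have hdvd := Hgne (i + d - 1) (i + k - 1) (by omega) hg12
        have e3 : (i + k - 1) - (i + d - 1) = k - d := by omega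
        rw [e3] at hdvd
        have := Nat.le_of_dvd (by omega) hdvd
        omega
      have hnx : f (i + 1) ∈ C.neighborSet (f i) := HAdj i
      have hne1 : f (i + 1) ≠ f (i + k - 1) := by
        intro heq
        have e : i + k - 1 + 2 = i + 1 + k := by omega
        have h0 := Hne2 (i + k - 1)
        rw [e, fper (i + 1)] at h0
        exact h0 heq
      have h1 : f (i + 1) = nextV G C (f i) (f (i + k - 1)) :=
        nextV_unique G hdw hp1 hnx hne1
      have h2 : f (i + d - 1) = nextV G C (f i) (f (i + k - 1)) :=
        nextV_unique G hdw hp1 hp2 (Ne.symm hp12)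
      have hrec : f (i + 1 + (d - 2)) = f (i + 1) := by
        have e : i + 1 + (d - 2) = i + d - 1 := by omega
        rw [e, h2, ← h1]
      exact ih (d - 2) (by omega) (by omega) (by omega) (i + 1) hrec
  -- the list and permutation
  set l : List V := (List.range k).map f with hldef
  have hlen : l.length = k := by simp [hldef]
  have hnodup : l.Nodup := by
    refine List.Nodup.map_on ?_ (List.nodup_range (n := k))
    intro x hx y hy hxy
    rw [List.mem_range] at hx hy
    rcases lt_trichotomy x y with h' | h' | h'
    · exfalso
      apply Hdist (y - x) (by omega) (by omega) x
      rw [show x + (y - x) = y by omega]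
      exact hxy.symm
    · exact h'
    · exfalso
      apply Hdist (x - y) (by omega) (by omega) y
      rw [show y + (x - y) = x by omega]
      exact hxy
  set c := l.formPerm with hcdef
  have hsupp : c.support = l.toFinset := by
    rw [hcdef]
    apply List.support_formPerm_of_nodup l hnodup
    intro x hx
    have := congrArg List.length hx
    rw [hlen] at this
    simp at this
    omega
  have hmeml : ∀ x, x ∈ l ↔ ∃ n, n < k ∧ f n = x := by
    intro x
    simp [hldef, List.mem_map, List.mem_range]
  have capp : ∀ n, n < k → c (f n) = f (n + 1) := by
    intro n hn
    have hn' : n < l.length := by rw [hlen]; exact hn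
    have hgete : l[n]'hn' = f n := by simp [hldef]
    have h1 := List.formPerm_apply_getElem l hnodup n hn'
    rw [hgete] at h1
    have hgete2 : l[(n + 1) % l.length]'(Nat.mod_lt _ (by omega)) = f ((n + 1) % l.length) := by
      simp [hldef]
    rw [hgete2, hlen] at h1
    rw [← hcdef] at h1
    rw [h1, ← fmod]
  have hvsupp : v ∈ c.support := by
    rw [hsupp, List.mem_toFinset, hmeml]
    exact ⟨0, by omega, rfl⟩
  have hcard : c.support.card = k := by
    rw [hsupp, List.toFinset_card_of_nodup hnodup, hlen]
  have hcyc : c.IsCycle := List.isCycle_formPerm hnodup (by omega)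
  have hadjP : ∀ i ∈ c.support, G.Adj (c i) i := by
    intro i hi
    rw [hsupp, List.mem_toFinset, hmeml] at hi
    obtain ⟨n, hn, rfl⟩ := hi
    rw [capp n hn]
    exact ((HAdj n).adj_sub).symm
  have hmemP : c ∈ cycP G v := (mem_cycP G).mpr ⟨hcyc, hvsupp, by omega, hadjP⟩
  -- vertices coincide
  have hTclosed : ∀ x y, (∃ n, f n = x) → C.Adj x y → ∃ n, f n = y := by
    rintro x y ⟨n, rfl⟩ hxy
    have hwv := Hmem n
    have hdw := hdeg _ hwv
    have hik : f (n + k) = f n := fper n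
    have hp1adj : C.Adj (f (n + k - 1)) (f n) := by
      have e : n + k - 1 + 1 = n + k := by omega
      have h0 := HAdj (n + k - 1)
      rw [e, hik] at h0; exact h0
    have hp1 : f (n + k - 1) ∈ C.neighborSet (f n) := hp1adj.symm
    have hnx : f (n + 1) ∈ C.neighborSet (f n) := HAdj n
    have hne1 : f (n + 1) ≠ f (n + k - 1) := by
      intro heq
      have e : n + k - 1 + 2 = n + 1 + k := by omega
      have h0 := Hne2 (n + k - 1)
      rw [e, fper (n + 1)] at h0
      exact h0 heq
    have hy : y ∈ C.neighborSet (f n) := hxy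
    rw [(nextV_spec G hdw hp1).2] at hy
    rcases hy with rfl | rfl
    · exact ⟨n + k - 1, rfl⟩
    · exact ⟨n + 1, nextV_unique G hdw hp1 hnx hne1⟩
  have hverts : ((toCyc G c).verts : Set V) = C.verts := by
    ext x
    rw [toCyc_verts]
    constructor
    · intro hx
      rw [Finset.mem_coe, hsupp, List.mem_toFinset, hmeml] at hx
      obtain ⟨n, _, rfl⟩ := hx
      exact Hmem n
    · intro hx
      have walkT : ∀ (a b : C.verts) (_ : C.coe.Walk a b),
          (∃ n, f n = (a : V)) → ∃ n, f n = (b : V) := by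
        intro a b p
        induction p with
        | nil => exact id
        | cons h q ihq =>
          intro ha
          exact ihq (hTclosed _ _ ha ((SimpleGraph.Subgraph.coe_adj _ _ _) ▸ h))
      have hreach := hconn ⟨v, hv⟩ ⟨x, hx⟩
      obtain ⟨n, hn⟩ := hreach.elim fun p => walkT _ _ p ⟨0, rfl⟩
      rw [Finset.mem_coe, hsupp, List.mem_toFinset, hmeml]
      refine ⟨n % k, Nat.mod_lt _ (by omega), ?_⟩
      rw [← fmod]; exact hn
  refine ⟨c, hmemP, SimpleGraph.Subgraph.ext hverts ?_⟩
  funext a b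
  apply propext
  constructor
  · rintro ⟨hG, h2 | h2⟩
    · by_cases ha : a ∈ c.support
      · rw [hsupp, List.mem_toFinset, hmeml] at ha
        obtain ⟨n, hn, rfl⟩ := ha
        rw [capp n hn] at h2
        rw [← h2]
        exact HAdj n
      · rw [Equiv.Perm.notMem_support.mp ha] at h2
        exact absurd h2 hG.ne
    · by_cases hb : b ∈ c.support
      · rw [hsupp, List.mem_toFinset, hmeml] at hb
        obtain ⟨n, hn, rfl⟩ := hb
        rw [capp n hn] at h2
        rw [← h2]
        exact (HAdj n).symm
      · rw [Equiv.Perm.notMem_support.mp hb] at h2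
        exact absurd h2 hG.ne'
  · intro hab
    have ha : a ∈ c.support := by
      have : a ∈ ((toCyc G c).verts : Set V) := by rw [hverts]; exact hab.fst_mem
      rw [toCyc_verts, Finset.mem_coe] at this
      exact this
    rw [hsupp, List.mem_toFinset, hmeml] at ha
    obtain ⟨m, hm, rfl⟩ := ha
    have hwv := Hmem m
    have hdw := hdeg _ hwv
    have hik : f (m + k) = f m := fper m
    have hp1adj : C.Adj (f (m + k - 1)) (f m) := by
      have e : m + k - 1 + 1 = m + k := by omega
      have h0 := HAdj (m + k - 1)
      rw [e, hik] at h0; exact h0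
    have hp1 : f (m + k - 1) ∈ C.neighborSet (f m) := hp1adj.symm
    have hnx : f (m + 1) ∈ C.neighborSet (f m) := HAdj m
    have hne1 : f (m + 1) ≠ f (m + k - 1) := by
      intro heq
      have e : m + k - 1 + 2 = m + 1 + k := by omega
      have h0 := Hne2 (m + k - 1)
      rw [e, fper (m + 1)] at h0
      exact h0 heq
    have hb : b ∈ C.neighborSet (f m) := hab
    rw [(nextV_spec G hdw hp1).2] at hb
    rcases hb with rfl | rfl
    · -- b = f (m + k - 1), show c b = f m
      refine ⟨hab.adj_sub, Or.inr ?_⟩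
      have hkpos : 0 < k := by omega
      have htk : (m + k - 1) % k < k := Nat.mod_lt _ hkpos
      have hft : f ((m + k - 1) % k) = f (m + k - 1) := (fmod _).symm
      rw [← hft, capp _ htk]
      rw [fmod ((m + k - 1) % k + 1)]
      rw [Nat.mod_add_mod]
      have e : m + k - 1 + 1 = m + k := by omega
      rw [e]
      rw [Nat.add_mod_right]
      exact (fmod m).symm
    · -- b = nextV _ = f (m + 1)
      have h1 : f (m + 1) = nextV G C (f m) (f (m + k - 1)) :=
        nextV_unique G hdw hp1 hnx hne1
      refine ⟨hab.adj_sub, Or.inl ?_⟩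
      rw [capp m hm, h1]
theorem sum_cycP_eq {R : Type*} [CommRing R] (v : V) (F : Set V → R) :
    ∑ c ∈ cycP G v, F ↑c.support
      = 2 * ∑ᶠ C ∈ {C : G.Subgraph | IsCycleSub G C ∧ v ∈ C.verts}, F C.verts := by
  have hfin : {C : G.Subgraph | IsCycleSub G C ∧ v ∈ C.verts}.Finite := Set.toFinite _
  have hrhs : ∑ᶠ C ∈ {C : G.Subgraph | IsCycleSub G C ∧ v ∈ C.verts}, F C.verts
      = ∑ C ∈ hfin.toFinset, F C.verts := by
    have h1 : ∑ᶠ C ∈ (↑hfin.toFinset : Set G.Subgraph), F C.verts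
        = ∑ᶠ C ∈ {C : G.Subgraph | IsCycleSub G C ∧ v ∈ C.verts}, F C.verts := by
      rw [hfin.coe_toFinset]
    rw [← h1, finsum_mem_coe_finset]
  rw [hrhs]
  have hS : ∀ C, C ∈ hfin.toFinset ↔ IsCycleSub G C ∧ v ∈ C.verts := by
    intro C; rw [Set.Finite.mem_toFinset]; rfl
  have hmapsto : ∀ c ∈ cycP G v, toCyc G c ∈ hfin.toFinset := by
    intro c hc
    rw [hS]
    exact toCyc_isCycleSub G hc
  have key : ∑ C ∈ hfin.toFinset,
        ∑ c ∈ (cycP G v).filter (fun c => toCyc G c = C), F ((toCyc G c).verts)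
      = ∑ c ∈ cycP G v, F ((toCyc G c).verts) :=
    Finset.sum_fiberwise_of_maps_to hmapsto _
  have hlhs : ∑ c ∈ cycP G v, F ↑c.support = ∑ c ∈ cycP G v, F ((toCyc G c).verts) := rfl
  rw [hlhs, ← key]
  rw [Finset.mul_sum]
  refine Finset.sum_congr rfl ?_
  intro C hC
  obtain ⟨c₀, hc₀P, hc₀⟩ := exists_perm_of_isCycleSub G ((hS C).mp hC).1 ((hS C).mp hC).2
  have hfilter : (cycP G v).filter (fun c => toCyc G c = C) = {c₀, c₀⁻¹} := by
    ext c
    rw [Finset.mem_filter, Finset.mem_insert, Finset.mem_singleton]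
    constructor
    · rintro ⟨hcP, hcC⟩
      exact toCyc_inj G hc₀P hcP (by rw [hcC, hc₀])
    · rintro (rfl | rfl)
      · exact ⟨hc₀P, hc₀⟩
      · exact ⟨inv_mem_cycP G hc₀P, by rw [toCyc_inv, hc₀]⟩
  rw [hfilter]
  have hne : c₀ ≠ c₀⁻¹ := (inv_ne_self G hc₀P).symm
  rw [Finset.sum_insert (by simpa using hne), Finset.sum_singleton]
  have h1 : (toCyc G c₀).verts = C.verts := by rw [hc₀]
  have h2 : (toCyc G c₀⁻¹).verts = C.verts := by rw [toCyc_inv, hc₀]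
  rw [h1, h2]
  ring
section Det

variable {R : Type*} [CommRing R]

theorem fiber_sum (M : Matrix V V R) (v : V) {c : Equiv.Perm V}
    (hc : c.cycleOf v = c) :
    ∑ σ ∈ Finset.univ.filter (fun σ : Equiv.Perm V => σ.cycleOf v = c),
        ((Equiv.Perm.sign σ : ℤ) : R) * ∏ i, M (σ i) i
      = ((Equiv.Perm.sign c : ℤ) : R) * (∏ i ∈ insert v c.support, M (c i) i) *
        (delSub M ↑(insert v c.support)).det := by
  classical
  set O : Finset V := insert v c.support with hOdef
  have hvO : v ∈ O := Finset.mem_insert_self _ _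
  have hsub : c.support ⊆ O := Finset.subset_insert _ _
  -- F1
  have F1 : ∀ σ : Equiv.Perm V, σ.cycleOf v = c → ∀ i ∈ O, σ i = c i := by
    intro σ hσ i hi
    rcases Finset.mem_insert.mp hi with rfl | hi
    · have h1 := Equiv.Perm.cycleOf_apply_self σ i
      rw [hσ] at h1
      exact h1.symm
    · rw [← hσ] at hi
      obtain ⟨hsc, -⟩ := Equiv.Perm.mem_support_cycleOf_iff.mp hi
      have h1 : (σ.cycleOf v) i = σ i := by
        rw [Equiv.Perm.cycleOf_apply, if_pos hsc]
      rw [hσ] at h1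
      exact h1.symm
  -- F2
  have F2mem : ∀ σ : Equiv.Perm V, σ.cycleOf v = c → ∀ i ∈ O, σ i ∈ O := by
    intro σ hσ i hi
    have h1 := F1 σ hσ i hi
    rcases Finset.mem_insert.mp hi with rfl | hi
    · by_cases hcv : c i = i
      · rw [h1, hcv]; exact hi
      · rw [h1]
        exact hsub (Equiv.Perm.apply_mem_support.mpr (Equiv.Perm.mem_support.mpr hcv))
    · rw [h1]
      exact hsub (Equiv.Perm.apply_mem_support.mpr hi)
  have F2nmem : ∀ σ : Equiv.Perm V, σ.cycleOf v = c → ∀ i, i ∉ O → σ i ∉ O := by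
    intro σ hσ i hi hmem
    rcases Finset.mem_insert.mp hmem with hσi | hσi
    · by_cases hiσ : i ∈ σ.support
      · have hvs : v ∈ σ.support := by
          rw [← hσi]; exact Equiv.Perm.apply_mem_support.mpr hiσ
        have hsc : σ.SameCycle v i := by
          refine ⟨-1, ?_⟩
          rw [_root_.zpow_neg_one, ← hσi, Equiv.Perm.inv_apply_self]
        have : i ∈ (σ.cycleOf v).support :=
          Equiv.Perm.mem_support_cycleOf_iff.mpr ⟨hsc, hvs⟩
        rw [hσ] at this
        exact hi (hsub this)
      · have : σ i = i := Equiv.Perm.notMem_support.mp hiσ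
        rw [this] at hσi
        exact hi (hσi ▸ hvO)
    · rw [← hσ] at hσi
      obtain ⟨hsc, hvs⟩ := Equiv.Perm.mem_support_cycleOf_iff.mp hσi
      have hsc' : σ.SameCycle v i := Equiv.Perm.sameCycle_apply_right.mp hsc
      by_cases hiσ : i ∈ σ.support
      · have : i ∈ (σ.cycleOf v).support :=
          Equiv.Perm.mem_support_cycleOf_iff.mpr ⟨hsc', hvs⟩
        rw [hσ] at this
        exact hi (hsub this)
      · have hfix : σ i = i := Equiv.Perm.notMem_support.mp hiσ
        rw [hfix] at hσi
        exact hiσ (Equiv.Perm.support_cycleOf_le σ v hσi)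
  have hiff : ∀ σ : Equiv.Perm V, σ.cycleOf v = c →
      ∀ x, (σ x ∉ (↑O : Set V)) ↔ (x ∉ (↑O : Set V)) := by
    intro σ hσ x
    rw [Iff.comm]
    constructor
    · intro hx hmem
      exact F2nmem σ hσ x (fun h => hx (Finset.mem_coe.mpr h)) (Finset.mem_coe.mp hmem)
    · intro hx hmem
      exact hx (Finset.mem_coe.mpr (F2mem σ hσ x (Finset.mem_coe.mp hmem)))
  -- decomposition
  have hdecomp : ∀ (σ : Equiv.Perm V) (hσ : σ.cycleOf v = c)
      (hp : ∀ x, (σ x ∉ (↑O : Set V)) ↔ (x ∉ (↑O : Set V))),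
      c * Equiv.Perm.ofSubtype (σ.subtypePerm (p := fun x => x ∉ (↑O : Set V)) hp) = σ := by
    intro σ hσ hp
    ext i
    rw [Equiv.Perm.mul_apply]
    by_cases hi : i ∈ O
    · rw [Equiv.Perm.ofSubtype_apply_of_not_mem (σ.subtypePerm hp)
        (not_not_intro (Finset.mem_coe.mpr hi))]
      exact (F1 σ hσ i hi).symm
    · have hpi : i ∉ (↑O : Set V) := by simpa using hi
      rw [Equiv.Perm.ofSubtype_apply_of_mem (σ.subtypePerm hp) hpi]
      have h2 : σ i ∉ c.support := fun h => F2nmem σ hσ i hi (hsub h)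
      calc c ((σ.subtypePerm (p := fun x => x ∉ (↑O : Set V)) hp) ⟨i, hpi⟩ : V) = c (σ i) := rfl
        _ = σ i := Equiv.Perm.notMem_support.mp h2
  -- membership of c * ofSubtype τ in the fiber
  have Hco : ∀ τ : Equiv.Perm {w : V // w ∉ (↑O : Set V)},
      (c * Equiv.Perm.ofSubtype τ).cycleOf v = c := by
    intro τ
    have hofs1 : ∀ i ∈ O, Equiv.Perm.ofSubtype τ i = i := by
      intro i hi
      exact Equiv.Perm.ofSubtype_apply_of_not_mem τ (not_not_intro (Finset.mem_coe.mpr hi))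
    have hofs2 : ∀ i, i ∉ O → Equiv.Perm.ofSubtype τ i ∉ O := by
      intro i hi
      have hpi : i ∉ (↑O : Set V) := by simpa using hi
      rw [Equiv.Perm.ofSubtype_apply_of_mem τ hpi]
      exact fun hmem => (τ ⟨i, hpi⟩).2 (Finset.mem_coe.mpr hmem)
    by_cases hcv : c v = v
    · have hc1 : c = 1 := by rw [← hc]; exact (Equiv.Perm.cycleOf_eq_one_iff c).mpr hcv
      have hv' : (c * Equiv.Perm.ofSubtype τ) v = v := by
        rw [Equiv.Perm.mul_apply, hofs1 v hvO, hcv]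
      exact ((Equiv.Perm.cycleOf_eq_one_iff _).mpr hv').trans hc1.symm
    · have hvs : v ∈ c.support := Equiv.Perm.mem_support.mpr hcv
      have hcyc : c.IsCycle := hc ▸ Equiv.Perm.isCycle_cycleOf c hcv
      have hpow : ∀ n : ℕ, ((c * Equiv.Perm.ofSubtype τ) ^ n) v = (c ^ n) v := by
        intro n
        induction n with
        | zero => rfl
        | succ n ih =>
          rw [pow_succ', pow_succ', Equiv.Perm.mul_apply, Equiv.Perm.mul_apply, ih,
            Equiv.Perm.mul_apply,
            hofs1 _ (hsub (Equiv.Perm.pow_apply_mem_support.mpr hvs))]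
      ext y
      by_cases hy : (c * Equiv.Perm.ofSubtype τ).SameCycle v y
      · rw [Equiv.Perm.cycleOf_apply, if_pos hy]
        obtain ⟨n, -, hn⟩ := hy.exists_pow_eq'
        have hyO : y ∈ O := by
          rw [← hn, hpow n]
          exact hsub (Equiv.Perm.pow_apply_mem_support.mpr hvs)
        rw [Equiv.Perm.mul_apply, hofs1 y hyO]
      · rw [Equiv.Perm.cycleOf_apply, if_neg hy]
        by_cases hys : y ∈ c.support
        · exfalso
          obtain ⟨n, hn⟩ := (mem_support_iff_pow hcyc hvs).mp hys
          exact hy ⟨(n : ℤ), by rw [zpow_natCast, hpow n, hn]⟩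
        · exact (Equiv.Perm.notMem_support.mp hys).symm
  -- now the bijection
  rw [Matrix.det_apply' (delSub M (↑O : Set V)), Finset.mul_sum]
  refine Finset.sum_bij'
    (i := fun σ hσ => σ.subtypePerm (hiff σ (Finset.mem_filter.mp hσ).2))
    (j := fun τ _ => c * Equiv.Perm.ofSubtype τ)
    (fun σ hσ => Finset.mem_univ _)
    (fun τ hτ => Finset.mem_filter.mpr ⟨Finset.mem_univ _, Hco τ⟩)
    ?_ ?_ ?_
  · -- left inverse
    intro σ hσ
    exact hdecomp σ (Finset.mem_filter.mp hσ).2 _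
  · -- right inverse
    intro τ hτ
    ext x
    have hpx : (x : V) ∉ (↑O : Set V) := x.2
    have h1 : (c * Equiv.Perm.ofSubtype τ) (x : V) = ((τ x : V)) := by
      rw [Equiv.Perm.mul_apply, Equiv.Perm.ofSubtype_apply_of_mem τ hpx]
      have h2 : ((τ x : V)) ∉ c.support := fun h => (τ x).2 (Finset.mem_coe.mpr (hsub h))
      exact Equiv.Perm.notMem_support.mp h2
    exact h1
  · -- summand equality
    intro σ hσmem
    have hσ : σ.cycleOf v = c := (Finset.mem_filter.mp hσmem).2
    set τ := σ.subtypePerm (p := fun x => x ∉ (↑O : Set V)) (hiff σ hσ) with hτdef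
    have hσdecomp := hdecomp σ hσ (hiff σ hσ)
    have hsign : Equiv.Perm.sign σ = Equiv.Perm.sign c * Equiv.Perm.sign τ := by
      conv_lhs => rw [← hσdecomp]
      rw [_root_.map_mul, Equiv.Perm.sign_ofSubtype]
    have hprodO : ∏ i ∈ O, M (σ i) i = ∏ i ∈ O, M (c i) i :=
      Finset.prod_congr rfl (fun i hi => by rw [F1 σ hσ i hi])
    have hmemiff : ∀ x, x ∈ Oᶜ ↔ (x ∉ (↑O : Set V)) := by
      intro x; rw [Finset.mem_compl]; simp
    have hprodC : ∏ i ∈ Oᶜ, M (σ i) i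
        = ∏ j : {w : V // w ∉ (↑O : Set V)}, (delSub M (↑O : Set V)) (τ j) j := by
      rw [Finset.prod_subtype (F := inferInstance) (Oᶜ) hmemiff (fun x => M (σ x) x)]
      rfl
    have htotal : ∏ i, M (σ i) i = (∏ i ∈ O, M (σ i) i) * ∏ i ∈ Oᶜ, M (σ i) i :=
      (Finset.prod_mul_prod_compl O _).symm
    have hcast : ((Equiv.Perm.sign σ : ℤ) : R)
        = ((Equiv.Perm.sign c : ℤ) : R) * ((Equiv.Perm.sign τ : ℤ) : R) := by
      rw [hsign]; push_cast; ring
    rw [hcast, htotal, hprodO, hprodC]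
    ring

theorem det_vertex_expansion (M : Matrix V V R) (v : V) :
    M.det = ∑ c ∈ Finset.univ.filter (fun c : Equiv.Perm V => c.cycleOf v = c),
      ((Equiv.Perm.sign c : ℤ) : R) * (∏ i ∈ insert v c.support, M (c i) i) *
        (delSub M ↑(insert v c.support)).det := by
  have hmaps : ∀ σ : Equiv.Perm V, σ ∈ (Finset.univ : Finset (Equiv.Perm V)) →
      σ.cycleOf v ∈ Finset.univ.filter (fun c : Equiv.Perm V => c.cycleOf v = c) := by
    intro σ _
    rw [Finset.mem_filter]
    refine ⟨Finset.mem_univ _, ?_⟩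
    by_cases h : σ v = v
    · rw [(Equiv.Perm.cycleOf_eq_one_iff σ).mpr h]
      exact (Equiv.Perm.cycleOf_eq_one_iff (x := v) 1).mpr rfl
    · exact (Equiv.Perm.isCycle_cycleOf σ h).cycleOf_eq
        (by rw [Equiv.Perm.cycleOf_apply_self]; exact h)
  have hfib := Finset.sum_fiberwise_of_maps_to hmaps
    (fun σ : Equiv.Perm V => ((Equiv.Perm.sign σ : ℤ) : R) * ∏ i, M (σ i) i)
  rw [Matrix.det_apply', ← hfib]
  refine Finset.sum_congr rfl ?_
  intro c hcK
  exact fiber_sum M v (Finset.mem_filter.mp hcK).2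

end Det
theorem det_irrel {n R : Type*} [CommRing R] {D D' : DecidableEq n} {F F' : Fintype n}
    (M : Matrix n n R) : @Matrix.det n D F R _ M = @Matrix.det n D' F' R _ M := by
  obtain rfl : D = D' := Subsingleton.elim _ _
  obtain rfl : F = F' := Subsingleton.elim _ _
  rfl

theorem phi_irrel {n R : Type*} [CommRing R] {F F' : Fintype n} {D D' : DecidableEq n}
    (M : Matrix n n (Polynomial R)) : @phi n R F D _ M = @phi n R F' D' _ M := by
  obtain rfl : D = D' := Subsingleton.elim _ _
  obtain rfl : F = F' := Subsingleton.elim _ _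
  rfl

theorem det_eq_phi_any {R : Type*} [CommRing R] (A B : Matrix V V (Polynomial R))
    (hB : B = (Polynomial.X : Polynomial R) • (1 : Matrix V V (Polynomial R)) - A)
    {S S' : Set V} (hS : S = S')
    {D : DecidableEq {w : V // w ∉ S}} {F : Fintype {w : V // w ∉ S}}
    {F' : Fintype {w : V // w ∉ S'}} {D' : DecidableEq {w : V // w ∉ S'}} :
    @Matrix.det _ D F _ _ (delSub B S) = @phi _ _ F' D' _ (delSub A S') := by
  subst hS
  subst hB
  exact (det_irrel _).trans ((phi_delSub_det A S).symm.trans (phi_irrel _))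

end SchwenkAux

set_option maxHeartbeats 1000000

theorem adjacency_charpoly_vertex_recursion
    {V : Type*} [Fintype V] [DecidableEq V]
    (G : SimpleGraph V) [DecidableRel G.Adj] (v : V) :
    phi (G.adjMatrix (Polynomial ℤ)) =
      Polynomial.X * phi (delSub (G.adjMatrix (Polynomial ℤ)) {v})
        - ∑ u ∈ G.neighborFinset v, phi (delSub (G.adjMatrix (Polynomial ℤ)) {u, v})
        - 2 * ∑ᶠ C ∈ {C : G.Subgraph | IsCycleSub G C ∧ v ∈ C.verts},
          phi (delSub (G.adjMatrix (Polynomial ℤ)) C.verts) := by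
  classical
  set A := G.adjMatrix (Polynomial ℤ) with hA
  set M := (Polynomial.X : Polynomial ℤ) • (1 : Matrix V V (Polynomial ℤ)) - A with hM
  set PhiF : Set V → Polynomial ℤ := fun S => phi (delSub A S) with hPhiF
  have hbridge : ∀ (t : Finset V) (S' : Set V), ↑t = S' →
      (delSub M (↑t : Set V)).det = PhiF S' := by
    intro t S' h
    rw [hPhiF]
    exact SchwenkAux.det_eq_phi_any A M hM h
  have hMdiag : ∀ i, M i i = (Polynomial.X : Polynomial ℤ) := by
    intro i
    rw [hM]
    simp [Matrix.sub_apply, Matrix.smul_apply, Matrix.one_apply_eq, hA]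
  have hMoff : ∀ i j : V, i ≠ j → M i j = -(if G.Adj i j then 1 else 0) := by
    intro i j h
    rw [hM]
    simp [Matrix.sub_apply, Matrix.smul_apply, Matrix.one_apply_ne h, hA]
  have hphiA : phi A = M.det := rfl
  set Fc : Equiv.Perm V → Polynomial ℤ := fun c =>
    ((Equiv.Perm.sign c : ℤ) : Polynomial ℤ) * (∏ i ∈ insert v c.support, M (c i) i) *
      (delSub M ↑(insert v c.support)).det with hFc
  have hFcApp : ∀ c : Equiv.Perm V, Fc c =
      ((Equiv.Perm.sign c : ℤ) : Polynomial ℤ) * (∏ i ∈ insert v c.support, M (c i) i) *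
      (delSub M ↑(insert v c.support)).det := fun c => rfl
  set K := Finset.univ.filter (fun c : Equiv.Perm V => c.cycleOf v = c) with hK
  have hdet : M.det = ∑ c ∈ K, Fc c := SchwenkAux.det_vertex_expansion M v
  have h1K : (1 : Equiv.Perm V) ∈ K := by
    rw [hK, Finset.mem_filter]
    exact ⟨Finset.mem_univ _, (Equiv.Perm.cycleOf_eq_one_iff (x := v) 1).mpr rfl⟩
  set K2 := (K.erase 1).filter (fun c => c.support.card = 2) with hK2
  set K3 := (K.erase 1).filter (fun c => ¬c.support.card = 2) with hK3
  have hsplit : ∑ c ∈ K, Fc c = Fc 1 + (∑ c ∈ K2, Fc c + ∑ c ∈ K3, Fc c) := by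
    rw [hK2, hK3, Finset.sum_filter_add_sum_filter_not, Finset.add_sum_erase K Fc h1K]
  have hKfacts : ∀ c ∈ K.erase 1, c.cycleOf v = c ∧ c v ≠ v ∧ c.IsCycle ∧ v ∈ c.support := by
    intro c hc
    obtain ⟨hne, hcK⟩ := Finset.mem_erase.mp hc
    rw [hK, Finset.mem_filter] at hcK
    have hcv : c v ≠ v := by
      intro h
      exact hne (by rw [← hcK.2]; exact (Equiv.Perm.cycleOf_eq_one_iff c).mpr h)
    exact ⟨hcK.2, hcv, hcK.2 ▸ Equiv.Perm.isCycle_cycleOf c hcv,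
      Equiv.Perm.mem_support.mpr hcv⟩
  -- term 1
  have hterm1 : Fc 1 = Polynomial.X * PhiF {v} := by
    rw [hFcApp]
    rw [hbridge (insert v (Equiv.Perm.support (1 : Equiv.Perm V))) ({v} : Set V) (by simp)]
    have e2 : insert v (Equiv.Perm.support (1 : Equiv.Perm V)) = ({v} : Finset V) := by simp
    rw [e2, Finset.prod_singleton, Equiv.Perm.one_apply, hMdiag, Equiv.Perm.sign_one]
    push_cast
    ring
  -- term 2
  have hK2img : K2 = Finset.image (fun u => Equiv.swap v u) (Finset.univ.erase v) := by
    ext c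
    constructor
    · intro hc
      rw [hK2, Finset.mem_filter] at hc
      obtain ⟨hcK, hcard⟩ := hc
      obtain ⟨-, hcv, -, -⟩ := hKfacts c hcK
      obtain ⟨x, y, hxy, rfl⟩ := Equiv.Perm.card_support_eq_two.mp hcard
      rw [Finset.mem_image]
      by_cases hvx : v = x
      · subst hvx
        exact ⟨y, Finset.mem_erase.mpr ⟨hxy.symm, Finset.mem_univ _⟩, rfl⟩
      · by_cases hvy : v = y
        · subst hvy
          exact ⟨x, Finset.mem_erase.mpr ⟨hxy, Finset.mem_univ _⟩, Equiv.swap_comm v x⟩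
        · exfalso
          exact hcv (Equiv.swap_apply_of_ne_of_ne hvx hvy)
    · intro hc
      rw [Finset.mem_image] at hc
      obtain ⟨u, hu, rfl⟩ := hc
      have hvu : v ≠ u := fun h => (Finset.mem_erase.mp hu).1 h.symm
      have hcyc : (Equiv.swap v u).IsCycle := Equiv.Perm.isCycle_swap hvu
      have hcv : Equiv.swap v u v ≠ v := by
        rw [Equiv.swap_apply_left]; exact hvu.symm
      rw [hK2, Finset.mem_filter, Finset.mem_erase]
      refine ⟨⟨hcyc.ne_one, ?_⟩, ?_⟩
      · rw [hK, Finset.mem_filter]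
        exact ⟨Finset.mem_univ _, hcyc.cycleOf_eq hcv⟩
      · rw [Equiv.Perm.support_swap hvu]
        rw [Finset.card_insert_of_notMem (by simpa using hvu), Finset.card_singleton]
  have hswapinj : ∀ x ∈ Finset.univ.erase v, ∀ y ∈ Finset.univ.erase v,
      Equiv.swap v x = Equiv.swap v y → x = y := by
    intro x _ y _ h
    have := congrArg (fun e : Equiv.Perm V => e v) h
    simpa [Equiv.swap_apply_left] using this
  have hterm2' : ∀ u, v ≠ u →
      Fc (Equiv.swap v u) = if G.Adj v u then -PhiF {u, v} else 0 := by
    intro u hvu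
    rw [hFcApp]
    have hsupp : insert v (Equiv.swap v u).support = {v, u} := by
      rw [Equiv.Perm.support_swap hvu]
      exact Finset.insert_eq_self.mpr (Finset.mem_insert_self _ _)
    have e1 : (↑(insert v (Equiv.swap v u).support) : Set V) = ({u, v} : Set V) := by
      rw [hsupp, Finset.coe_insert, Finset.coe_singleton, Set.pair_comm]
    have hsign : ((Equiv.Perm.sign (Equiv.swap v u) : ℤ) : Polynomial ℤ) = -1 := by
      rw [Equiv.Perm.sign_swap hvu]; push_cast; ring
    have hprod : ∏ i ∈ ({v, u} : Finset V), M (Equiv.swap v u i) i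
        = if G.Adj v u then 1 else 0 := by
      rw [Finset.prod_pair hvu, Equiv.swap_apply_left, Equiv.swap_apply_right,
        hMoff u v hvu.symm, hMoff v u hvu]
      by_cases hadj : G.Adj v u
      · simp [hadj, hadj.symm]
      · simp [hadj, fun h : G.Adj u v => hadj h.symm]
    rw [hbridge (insert v (Equiv.swap v u).support) ({u, v} : Set V) e1, hsupp, hprod, hsign]
    by_cases hadj : G.Adj v u
    · simp [hadj]
    · simp [hadj]
  have hterm2 : ∑ c ∈ K2, Fc c = -∑ u ∈ G.neighborFinset v, PhiF {u, v} := by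
    rw [hK2img, Finset.sum_image hswapinj]
    have hcg : ∀ u ∈ Finset.univ.erase v,
        Fc (Equiv.swap v u) = if G.Adj v u then -PhiF {u, v} else 0 := by
      intro u hu
      exact hterm2' u (fun h => (Finset.mem_erase.mp hu).1 h.symm)
    rw [Finset.sum_congr rfl hcg, ← Finset.sum_filter]
    have hfil : (Finset.univ.erase v).filter (fun u => G.Adj v u) = G.neighborFinset v := by
      ext u
      rw [Finset.mem_filter, Finset.mem_erase, SimpleGraph.mem_neighborFinset]
      constructor
      · rintro ⟨-, h⟩; exact h
      · intro h; exact ⟨⟨h.ne', Finset.mem_univ _⟩, h⟩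
    rw [hfil, Finset.sum_neg_distrib]
  -- term 3
  have hterm3' : ∀ c ∈ K3,
      Fc c = if (∀ i ∈ c.support, G.Adj (c i) i) then -PhiF ↑c.support else 0 := by
    intro c hc
    rw [hK3, Finset.mem_filter] at hc
    obtain ⟨hcK, hcard2⟩ := hc
    obtain ⟨hcOf, hcv, hcyc, hvs⟩ := hKfacts c hcK
    have hins : insert v c.support = c.support := Finset.insert_eq_self.mpr hvs
    have e1 : (↑(insert v c.support) : Set V) = (↑c.support : Set V) := by rw [hins]
    rw [hFcApp, hbridge (insert v c.support) (↑c.support : Set V) e1, hins]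
    have h1 : ∀ i ∈ c.support, M (c i) i
        = (-1) * (if G.Adj (c i) i then 1 else 0) := by
      intro i hi
      rw [hMoff (c i) i (Equiv.Perm.mem_support.mp hi), neg_one_mul]
    rw [Finset.prod_congr rfl h1, Finset.prod_mul_distrib, Finset.prod_const,
      Finset.prod_boole]
    have hsign : ((Equiv.Perm.sign c : ℤ) : Polynomial ℤ)
        = -(-1 : Polynomial ℤ) ^ c.support.card := by
      rw [hcyc.sign]; push_cast; ring
    rw [hsign]
    have hsq : ((-1 : Polynomial ℤ) ^ c.support.card) * (-1) ^ c.support.card = 1 := by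
      rw [← mul_pow]; norm_num
    by_cases hadj : ∀ i ∈ c.support, G.Adj (c i) i
    · rw [if_pos hadj, if_pos hadj]
      calc -(-1 : Polynomial ℤ) ^ c.support.card * ((-1) ^ c.support.card * 1) *
            PhiF ↑c.support
          = -(((-1 : Polynomial ℤ) ^ c.support.card) * (-1) ^ c.support.card) *
            PhiF ↑c.support := by ring
        _ = -PhiF ↑c.support := by rw [hsq]; ring
    · rw [if_neg hadj, if_neg hadj]
      ring
  have hK3fil : K3.filter (fun c => ∀ i ∈ c.support, G.Adj (c i) i) = SchwenkAux.cycP G v := by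
    ext c
    rw [Finset.mem_filter, SchwenkAux.mem_cycP]
    constructor
    · rintro ⟨hc, hadj⟩
      rw [hK3, Finset.mem_filter] at hc
      obtain ⟨hcK, hcard2⟩ := hc
      obtain ⟨hcOf, hcv, hcyc, hvs⟩ := hKfacts c hcK
      have h2 := hcyc.two_le_card_support
      exact ⟨hcyc, hvs, by omega, hadj⟩
    · rintro ⟨hcyc, hvs, h3, hadj⟩
      have hcv : c v ≠ v := Equiv.Perm.mem_support.mp hvs
      refine ⟨?_, hadj⟩
      rw [hK3, Finset.mem_filter, Finset.mem_erase]
      refine ⟨⟨hcyc.ne_one, ?_⟩, by omega⟩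
      rw [hK, Finset.mem_filter]
      exact ⟨Finset.mem_univ _, hcyc.cycleOf_eq hcv⟩
  have hterm3 : ∑ c ∈ K3, Fc c
      = -(2 * ∑ᶠ C ∈ {C : G.Subgraph | IsCycleSub G C ∧ v ∈ C.verts}, PhiF C.verts) := by
    rw [Finset.sum_congr rfl hterm3', ← Finset.sum_filter, hK3fil, Finset.sum_neg_distrib]
    rw [SchwenkAux.sum_cycP_eq G v PhiF]
  -- converting PhiF back to phi with the ambient instances
  have haux : ∀ S : Set V, PhiF S = (fun S : Set V => phi (delSub A S)) S := by
    intro S; rw [hPhiF]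
  have hfin1 : PhiF ({v} : Set V) = phi (delSub A ({v} : Set V)) :=
    (haux _).trans (SchwenkAux.phi_irrel _)
  have hfin2 : ∀ u : V, PhiF ({u, v} : Set V) = phi (delSub A ({u, v} : Set V)) :=
    fun u => (haux _).trans (SchwenkAux.phi_irrel _)
  have hfin3 : ∀ C : G.Subgraph, PhiF C.verts = phi (delSub A C.verts) :=
    fun C => (haux _).trans (SchwenkAux.phi_irrel _)
  rw [hphiA, hdet, hsplit, hterm1, hterm2, hterm3]
  simp only [hfin1, hfin2, hfin3]
  ring
end
end
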